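/- arXiv:1911.00801 — 9 statements merged into one kernel-verified Lean document; each statement's English description precedes it below -/
import Mathlib

section
/- For all pairs of natural numbers (n, m) satisfying one of: n ≥ 4 and m ≥ 8; n ≥ 6 and m ≥ 5; n ≥ 8 and m ≥ 4; or n ≥ 12 and m ≥ 3, the inequality 4·arccosh(cos(π/m)/sin(π/n)) > 2·log(n) holds, where arccosh(x) = log(x + √(x² − 1)). -/
open Real

/-- `arccosh x = log (x + √(x² - 1))`. -/
noncomputable def arccosh (x : ℝ) : ℝ := Real.log (x + Real.sqrt (x ^ 2 - 1))

lemma key_lemma (x : ℝ) (n : ℝ) (hn : 1 ≤ n) (hx : n + 1 < 2 * x * Real.sqrt n) :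
    4 * arccosh x > 2 * Real.log n := by
  set t := Real.sqrt n with htdef
  have ht1 : 1 ≤ t := by
    rw [htdef, show (1:ℝ) = Real.sqrt 1 by simp]
    exact Real.sqrt_le_sqrt hn
  have ht0 : 0 < t := by linarith
  have ht2 : t ^ 2 = n := Real.sq_sqrt (by linarith)
  have hx1 : 1 < x := by nlinarith [sq_nonneg (t - 1)]
  have hs0 : (0:ℝ) ≤ x ^ 2 - 1 := by nlinarith
  set s := Real.sqrt (x ^ 2 - 1) with hsdef
  have hsnn : 0 ≤ s := Real.sqrt_nonneg _
  have hs2 : s ^ 2 = x ^ 2 - 1 := Real.sq_sqrt hs0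
  have hlt : t < x + s := by
    by_contra hc
    push_neg at hc
    have h1 : s ≤ t - x := by linarith
    have h2 : s ^ 2 ≤ (t - x) ^ 2 := by
      have := pow_le_pow_left₀ hsnn h1 2
      simpa using this
    nlinarith
  have hlog : Real.log t < Real.log (x + s) := Real.log_lt_log ht0 hlt
  have hlogn : Real.log n = 2 * Real.log t := by
    rw [htdef, Real.log_sqrt (by linarith)]; ring
  unfold arccosh
  rw [← hsdef, hlogn]
  linarith

/-- Auxiliary: if `c ≤ cos (π/m)` and `π (n+1) < 2 c n √n`, the goal holds. -/
lemma aux_lemma (n m : ℕ) (c : ℝ) (hn : 2 ≤ n)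
    (hc : c ≤ Real.cos (π / m))
    (hkey : π * ((n : ℝ) + 1) < 2 * c * n * Real.sqrt n) :
    4 * arccosh (Real.cos (π / m) / Real.sin (π / n)) > 2 * Real.log n := by
  have hnR : (2:ℝ) ≤ (n:ℝ) := by exact_mod_cast hn
  have hpi : (0:ℝ) < π := Real.pi_pos
  have hsinpos : 0 < Real.sin (π / n) := by
    apply Real.sin_pos_of_pos_of_lt_pi
    · positivity
    · rw [div_lt_iff₀ (by linarith)]
      nlinarith
  have hsinlt : Real.sin (π / n) < π / n := Real.sin_lt (by positivity)
  have hc0 : 0 < c := by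
    by_contra hc0
    push_neg at hc0
    have h1 : 2 * c * n * Real.sqrt n ≤ 0 := by
      have h2 : 0 ≤ (n:ℝ) * Real.sqrt n := by positivity
      nlinarith
    nlinarith
  have hsq : 0 < Real.sqrt n := Real.sqrt_pos.mpr (by linarith)
  apply key_lemma _ _ (by linarith)
  have hstep : ((n:ℝ) + 1) * Real.sin (π / n) < 2 * Real.cos (π / m) * Real.sqrt n := by
    have h1 : ((n:ℝ) + 1) * Real.sin (π / n) < ((n:ℝ) + 1) * (π / n) :=
      mul_lt_mul_of_pos_left hsinlt (by linarith)
    have hn0 : (0:ℝ) < n := by linarith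
    have h2 : ((n:ℝ) + 1) * (π / n) < 2 * c * Real.sqrt n := by
      rw [← sub_pos]
      have he : 2 * c * Real.sqrt n - ((n:ℝ) + 1) * (π / n)
          = (2 * c * n * Real.sqrt n - π * ((n:ℝ) + 1)) / n := by
        field_simp
      rw [he]
      apply div_pos (by linarith) hn0
    have h3 : 2 * c * Real.sqrt n ≤ 2 * Real.cos (π / m) * Real.sqrt n := by
      apply mul_le_mul_of_nonneg_right _ (le_of_lt hsq)
      linarith
    linarith
  have he : 2 * (Real.cos (π / m) / Real.sin (π / n)) * Real.sqrt n
      = 2 * Real.cos (π / m) * Real.sqrt n / Real.sin (π / n) := by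
    field_simp
  rw [he, lt_div_iff₀ hsinpos]
  exact hstep

/-- `cos (π/m)` is at least `cos (π/m₀)` when `m₀ ≤ m`. -/
lemma cos_mono (m m₀ : ℕ) (hm0 : 1 ≤ m₀) (hm : m₀ ≤ m) :
    Real.cos (π / m₀) ≤ Real.cos (π / m) := by
  have hpi : (0:ℝ) < π := Real.pi_pos
  have hm0R : (1:ℝ) ≤ (m₀:ℝ) := by exact_mod_cast hm0
  have hmR : (m₀:ℝ) ≤ (m:ℝ) := by exact_mod_cast hm
  apply Real.cos_le_cos_of_nonneg_of_le_pi
  · positivity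
  · rw [div_le_iff₀ (by linarith)]
    nlinarith
  · exact div_le_div_of_nonneg_left (le_of_lt hpi) (by linarith) hmR

set_option maxHeartbeats 1000000 in
/-- Proposition 3.6 (even case): for natural numbers `(n, m)` in the stated ranges,
`4 · arccosh(cos(π/m)/sin(π/n)) > 2 · log n`. -/
theorem stmt_0 (n m : ℕ)
    (h : (4 ≤ n ∧ 8 ≤ m) ∨ (6 ≤ n ∧ 5 ≤ m) ∨ (8 ≤ n ∧ 4 ≤ m) ∨ (12 ≤ n ∧ 3 ≤ m)) :
    4 * arccosh (Real.cos (π / m) / Real.sin (π / n)) > 2 * Real.log n := by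
  have hpi : (0:ℝ) < π := Real.pi_pos
  have hpi4 : π < 3.15 := by
    have := Real.pi_lt_d2
    linarith
  -- numeric sqrt facts
  have hs2 : Real.sqrt 2 ^ 2 = 2 := Real.sq_sqrt (by norm_num)
  have hs2pos : (0:ℝ) < Real.sqrt 2 := Real.sqrt_pos.mpr (by norm_num)
  have hs2lo : (1.414:ℝ) < Real.sqrt 2 := by nlinarith
  have hs2hi : Real.sqrt 2 < 1.415 := by nlinarith [sq_nonneg (Real.sqrt 2 - 1.415)]
  have hs5 : Real.sqrt 5 ^ 2 = 5 := Real.sq_sqrt (by norm_num)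
  have hs5pos : (0:ℝ) < Real.sqrt 5 := Real.sqrt_pos.mpr (by norm_num)
  have hs5lo : (2.2:ℝ) < Real.sqrt 5 := by nlinarith
  -- cosine bounds
  have hcos8 : (0.92:ℝ) < Real.cos (π / 8) := by
    have hcnn : 0 ≤ Real.cos (π / 8) := by
      apply Real.cos_nonneg_of_mem_Icc
      constructor <;> [linarith [div_nonneg hpi.le (by norm_num : (0:ℝ) ≤ 8)];
        (rw [div_le_div_iff₀ (by norm_num) (by norm_num)]; linarith)]
    have hsq : Real.cos (π / 8) ^ 2 = (2 + Real.sqrt 2) / 4 := by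
      rw [Real.cos_pi_div_eight, div_pow, Real.sq_sqrt (by positivity)]
      norm_num
    nlinarith
  have hcos5 : (0.8:ℝ) < Real.cos (π / 5) := by
    rw [Real.cos_pi_div_five]
    nlinarith
  have hcos4 : (0.707:ℝ) < Real.cos (π / 4) := by
    rw [Real.cos_pi_div_four]
    nlinarith
  have hcos3 : (0.5:ℝ) ≤ Real.cos (π / 3) := by
    rw [Real.cos_pi_div_three]; norm_num
  -- generic sqrt monotonicity
  have hsqn : ∀ k : ℕ, (k:ℝ) ≤ (n:ℝ) → Real.sqrt k ≤ Real.sqrt n := fun k hk =>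
    Real.sqrt_le_sqrt hk
  rcases h with ⟨hn, hm⟩ | ⟨hn, hm⟩ | ⟨hn, hm⟩ | ⟨hn, hm⟩
  · -- n ≥ 4, m ≥ 8
    have hcm : (0.92:ℝ) < Real.cos (π / m) :=
      lt_of_lt_of_le hcos8 (cos_mono m 8 (by norm_num) hm)
    rcases eq_or_lt_of_le hn with h4 | h5
    · -- n = 4 : direct
      subst h4
      have hsin : Real.sin (π / (4:ℕ)) = Real.sqrt 2 / 2 := by
        norm_num [Real.sin_pi_div_four]
      have hlog4 : ((4:ℕ):ℝ) = (4:ℝ) := by norm_num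
      rw [hsin, hlog4]
      apply key_lemma _ 4 (by norm_num)
      have hsqrt4 : Real.sqrt 4 = 2 := by
        rw [show (4:ℝ) = 2 ^ 2 by norm_num, Real.sqrt_sq (by norm_num)]
      rw [hsqrt4]
      have he : 2 * (Real.cos (π / m) / (Real.sqrt 2 / 2)) * 2
          = 8 * Real.cos (π / m) / Real.sqrt 2 := by
        field_simp; ring
      rw [he, lt_div_iff₀ hs2pos]
      nlinarith
    · -- n ≥ 5
      have hn5 : (5:ℝ) ≤ (n:ℝ) := by exact_mod_cast h5
      apply aux_lemma n m 0.92 (by omega) hcm.le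
      have h1 : (2.23:ℝ) ≤ Real.sqrt n := by
        have h2 : Real.sqrt 5 ≤ Real.sqrt n := hsqn 5 (by exact_mod_cast h5)
        have : (2.23:ℝ) < Real.sqrt 5 := by nlinarith
        linarith
      have hns : (n:ℝ) * 2.23 ≤ (n:ℝ) * Real.sqrt n :=
        mul_le_mul_of_nonneg_left h1 (by positivity)
      nlinarith
  · -- n ≥ 6, m ≥ 5
    have hcm : (0.8:ℝ) < Real.cos (π / m) :=
      lt_of_lt_of_le hcos5 (cos_mono m 5 (by norm_num) hm)
    have hn6 : (6:ℝ) ≤ (n:ℝ) := by exact_mod_cast hn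
    apply aux_lemma n m 0.8 (by omega) hcm.le
    have hs6 : Real.sqrt 6 ^ 2 = 6 := Real.sq_sqrt (by norm_num)
    have hs6pos : (0:ℝ) ≤ Real.sqrt 6 := Real.sqrt_nonneg _
    have h1 : (2.44:ℝ) ≤ Real.sqrt n := by
      have h2 : Real.sqrt 6 ≤ Real.sqrt n := hsqn 6 (by exact_mod_cast hn)
      nlinarith
    have hns : (n:ℝ) * 2.44 ≤ (n:ℝ) * Real.sqrt n :=
      mul_le_mul_of_nonneg_left h1 (by positivity)
    nlinarith
  · -- n ≥ 8, m ≥ 4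
    have hcm : (0.707:ℝ) < Real.cos (π / m) :=
      lt_of_lt_of_le hcos4 (cos_mono m 4 (by norm_num) hm)
    have hn8 : (8:ℝ) ≤ (n:ℝ) := by exact_mod_cast hn
    apply aux_lemma n m 0.707 (by omega) hcm.le
    have hs8 : Real.sqrt 8 ^ 2 = 8 := Real.sq_sqrt (by norm_num)
    have hs8pos : (0:ℝ) ≤ Real.sqrt 8 := Real.sqrt_nonneg _
    have h1 : (2.82:ℝ) ≤ Real.sqrt n := by
      have h2 : Real.sqrt 8 ≤ Real.sqrt n := hsqn 8 (by exact_mod_cast hn)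
      nlinarith
    have hns : (n:ℝ) * 2.82 ≤ (n:ℝ) * Real.sqrt n :=
      mul_le_mul_of_nonneg_left h1 (by positivity)
    nlinarith
  · -- n ≥ 12, m ≥ 3
    have hcm : (0.5:ℝ) ≤ Real.cos (π / m) :=
      le_trans hcos3 (cos_mono m 3 (by norm_num) hm)
    have hn12 : (12:ℝ) ≤ (n:ℝ) := by exact_mod_cast hn
    apply aux_lemma n m 0.5 (by omega) hcm
    have hs12 : Real.sqrt 12 ^ 2 = 12 := Real.sq_sqrt (by norm_num)
    have hs12pos : (0:ℝ) ≤ Real.sqrt 12 := Real.sqrt_nonneg _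
    have h1 : (3.46:ℝ) ≤ Real.sqrt n := by
      have h2 : Real.sqrt 12 ≤ Real.sqrt n := hsqn 12 (by exact_mod_cast hn)
      nlinarith
    have hns : (n:ℝ) * 3.46 ≤ (n:ℝ) * Real.sqrt n :=
      mul_le_mul_of_nonneg_left h1 (by positivity)
    nlinarith
end

section
/- For all real numbers n, m satisfying one of: n ≥ 4 and m ≥ 7; n ≥ 6 and m ≥ 4; or n ≥ 8 and m ≥ 3, one has cos(π/m)/sin(π/n) ≥ 5/4. -/
open Real

lemma key_aux (n m n0 m0 : ℝ) (hn0 : 2 ≤ n0) (hm0 : 2 ≤ m0)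
    (hn : n0 ≤ n) (hm : m0 ≤ m)
    (hnum : 5 / 4 * Real.sin (π / n0) ≤ Real.cos (π / m0)) :
    Real.cos (π / m) / Real.sin (π / n) ≥ 5 / 4 := by
  have hpi := Real.pi_pos
  have hn0pos : (0:ℝ) < n0 := by linarith
  have hnpos : (0:ℝ) < n := by linarith
  have hm0pos : (0:ℝ) < m0 := by linarith
  have hmpos : (0:ℝ) < m := by linarith
  have h1 : π / n ≤ π / n0 := div_le_div_of_nonneg_left hpi.le hn0pos hn
  have h2 : π / n0 ≤ π / 2 := div_le_div_of_nonneg_left hpi.le (by norm_num) hn0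
  have h3 : 0 < π / n := div_pos hpi hnpos
  have hsinpos : 0 < Real.sin (π / n) :=
    Real.sin_pos_of_pos_of_lt_pi h3 (by
      calc π / n ≤ π / n0 := h1
        _ ≤ π / 2 := h2
        _ < π := by linarith)
  have hsin : Real.sin (π / n) ≤ Real.sin (π / n0) :=
    Real.sin_le_sin_of_le_of_le_pi_div_two (by linarith) h2 h1
  have h4 : π / m ≤ π / m0 := div_le_div_of_nonneg_left hpi.le hm0pos hm
  have h5 : π / m0 ≤ π := by
    calc π / m0 ≤ π / 2 := div_le_div_of_nonneg_left hpi.le (by norm_num) hm0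
      _ ≤ π := by linarith
  have hcos : Real.cos (π / m0) ≤ Real.cos (π / m) :=
    Real.cos_le_cos_of_nonneg_of_le_pi (le_of_lt (div_pos hpi hmpos)) h5 h4
  rw [ge_iff_le, le_div_iff₀ hsinpos]
  nlinarith

/-- For real `n, m` in the stated ranges, `cos(π/m)/sin(π/n) ≥ 5/4`. -/
theorem stmt_2 (n m : ℝ)
    (h : (4 ≤ n ∧ 7 ≤ m) ∨ (6 ≤ n ∧ 4 ≤ m) ∨ (8 ≤ n ∧ 3 ≤ m)) :
    Real.cos (π / m) / Real.sin (π / n) ≥ 5 / 4 := by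
  have hpi := Real.pi_pos
  have hpi' := Real.pi_lt_d2
  rcases h with ⟨hn, hm⟩ | ⟨hn, hm⟩ | ⟨hn, hm⟩
  · refine key_aux n m 4 7 (by norm_num) (by norm_num) hn hm ?_
    have hs : Real.sin (π / 4) = Real.sqrt 2 / 2 := Real.sin_pi_div_four
    have hc : 1 - (π / 7) ^ 2 / 2 ≤ Real.cos (π / 7) := Real.one_sub_sq_div_two_le_cos
    have h2 : Real.sqrt 2 < 1.4143 := by
      rw [show (1.4143:ℝ) = Real.sqrt (1.4143^2) by rw [Real.sqrt_sq]; norm_num]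
      exact Real.sqrt_lt_sqrt (by norm_num) (by norm_num)
    nlinarith [Real.sqrt_nonneg 2]
  · refine key_aux n m 6 4 (by norm_num) (by norm_num) hn hm ?_
    rw [Real.sin_pi_div_six, Real.cos_pi_div_four]
    nlinarith [Real.sq_sqrt (by norm_num : (2:ℝ) ≥ 0), Real.sqrt_nonneg 2]
  · refine key_aux n m 8 3 (by norm_num) (by norm_num) hn hm ?_
    rw [Real.cos_pi_div_three]
    have h1 : Real.sin (π / 8) ≤ π / 8 := Real.sin_le (by positivity)
    nlinarith
end

section
/- The function f_r(n) = sin(π/n)·(√n + 1/2)/2 is strictly decreasing in n on the real interval [4, ∞). -/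
open Real

/-- The function `f_r(n) = sin(π/n)·(√n + 1/2)/2` is strictly decreasing on `[4, ∞)`. -/
theorem stmt_5 :
    StrictAntiOn (fun n : ℝ => Real.sin (π / n) * (Real.sqrt n + 1 / 2) / 2)
      (Set.Ici (4 : ℝ)) := by
  apply StrictAntiOn.mono (s := Set.Ici (4:ℝ)) ?_ le_rfl
  apply strictAntiOn_of_deriv_neg (convex_Ici 4)
  · apply ContinuousOn.div_const
    apply ContinuousOn.mul
    · exact Real.continuous_sin.comp_continuousOn
        (continuousOn_const.div continuousOn_id (fun x hx => by
          have : (4:ℝ) ≤ x := hx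
          positivity))
    · exact (Real.continuous_sqrt.continuousOn).add continuousOn_const
  · intro x hx
    rw [interior_Ici] at hx
    have hx4 : (4:ℝ) < x := hx
    have hx0 : (0:ℝ) < x := by linarith
    -- derivative computation
    have h1 : HasDerivAt (fun n : ℝ => π / n) (π * (-(x^2)⁻¹)) x := by
      simpa [div_eq_mul_inv] using (hasDerivAt_inv hx0.ne').const_mul π
    have h2 : HasDerivAt (fun n : ℝ => Real.sin (π / n))
        (Real.cos (π / x) * (π * (-(x^2)⁻¹))) x :=
      (Real.hasDerivAt_sin (π / x)).comp x h1
    have h3 : HasDerivAt (fun n : ℝ => Real.sqrt n + 1/2)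
        (1 / (2 * Real.sqrt x)) x := (Real.hasDerivAt_sqrt hx0.ne').add_const _
    have hd : HasDerivAt (fun n : ℝ => Real.sin (π / n) * (Real.sqrt n + 1 / 2) / 2)
        ((Real.cos (π / x) * (π * (-(x^2)⁻¹)) * (Real.sqrt x + 1/2)
          + Real.sin (π / x) * (1 / (2 * Real.sqrt x))) / 2) x :=
      (h2.mul h3).div_const 2
    rw [hd.deriv]
    -- now the inequality
    set s := Real.sqrt x with hs_def
    have hs : s * s = x := Real.mul_self_sqrt hx0.le
    have hsnn : 0 ≤ s := Real.sqrt_nonneg x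
    have hs2 : 2 < s := by nlinarith
    have hs0 : 0 < s := by linarith
    set t := Real.sin (π / x) with ht_def
    set c := Real.cos (π / x) with hc_def
    have hpix : 0 < π / x := by positivity
    have hsin : t < π / x := Real.sin_lt hpix
    have htx : t * x < π := (lt_div_iff₀ hx0).mp hsin
    have htpos : 0 < t := Real.sin_pos_of_pos_of_lt_pi hpix (by
      rw [div_lt_iff₀ hx0]
      nlinarith [Real.pi_pos])
    have hcos : Real.sqrt 2 / 2 ≤ c := by
      rw [hc_def, ← Real.cos_pi_div_four]
      apply Real.cos_le_cos_of_nonneg_of_le_pi hpix.le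
      · linarith [Real.pi_le_four, Real.pi_pos]
      · rw [div_le_div_iff₀ hx0 (by norm_num)]
        nlinarith [Real.pi_pos]
    have h2sq : Real.sqrt 2 * Real.sqrt 2 = 2 := Real.mul_self_sqrt (by norm_num)
    have h21 : 1 < Real.sqrt 2 := by nlinarith [Real.sqrt_nonneg 2]
    have hx2 : (0:ℝ) < x^2 := by positivity
    have key : t * (1 / (2 * s)) < c * (π * (x^2)⁻¹) * (s + 1/2) := by
      rw [mul_one_div, ← mul_assoc]
      rw [div_lt_iff₀ (by positivity)]
      have hrw : c * π * (x^2)⁻¹ * (s + 1/2) * (2 * s)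
          = c * π * (s + 1/2) * (2 * s) / (x^2) := by ring
      rw [hrw, lt_div_iff₀ hx2]
      have h5 : t * x^2 < π * x := by nlinarith
      have h6 : π * x ≤ c * π * (s + 1/2) * (2 * s) := by
        have hc2 : Real.sqrt 2 ≤ 2 * c := by linarith
        have e1 : 0 ≤ (2*c - Real.sqrt 2) * x := mul_nonneg (by linarith) hx0.le
        have e2 : 0 ≤ (Real.sqrt 2 - 1) * x := mul_nonneg (by linarith) hx0.le
        have e3 : 0 ≤ c * s := mul_nonneg (by linarith) hs0.le
        have h7 : x ≤ 2 * c * (s * s) + c * s := by nlinarith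
        have h8 : π * x ≤ π * (2 * c * (s * s) + c * s) :=
          mul_le_mul_of_nonneg_left h7 Real.pi_pos.le
        nlinarith [h8]
      linarith
    nlinarith [key]
end

section
/- For all real numbers n, m satisfying one of: n ≥ 4 and m ≥ 8; n ≥ 6 and m ≥ 6; n ≥ 8 and m ≥ 4; or n ≥ 14 and m ≥ 3, the inequality cos(π/m) > sin(π/n)·(√n + 1/2)/2 holds. -/
open Real

/-- Linear upper bound: `sin(π/n)·(√n+1/2)/2 ≤ π/(2√a) + π/(4a)` for `1 ≤ a ≤ n`. -/
lemma stmt_6_lin (n a : ℝ) (ha : 1 ≤ a) (han : a ≤ n) :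
    Real.sin (π / n) * (Real.sqrt n + 1 / 2) / 2 ≤ π / (2 * Real.sqrt a) + π / (4 * a) := by
  have hn1 : (1:ℝ) ≤ n := le_trans ha han
  have hn0 : (0:ℝ) < n := by linarith
  have ha0 : (0:ℝ) < a := by linarith
  have hpi : 0 < π := Real.pi_pos
  set s := Real.sqrt n with hs
  set t := Real.sqrt a with ht
  have hsn : s ^ 2 = n := Real.sq_sqrt hn0.le
  have hta : t ^ 2 = a := Real.sq_sqrt ha0.le
  have hts : t ≤ s := Real.sqrt_le_sqrt han
  have ht1 : 1 ≤ t := by nlinarith [Real.sqrt_nonneg a]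
  have hs1 : 1 ≤ s := le_trans ht1 hts
  have hs0 : 0 < s := by linarith
  have ht0 : 0 < t := by linarith
  have hsin : Real.sin (π / n) ≤ π / n := Real.sin_le (by positivity)
  have h1 : Real.sin (π / n) * (s + 1 / 2) / 2 ≤ (π / n) * (s + 1 / 2) / 2 := by
    have hpos : (0:ℝ) ≤ s + 1 / 2 := by linarith
    nlinarith
  have e3 : (π / n) * (s + 1 / 2) / 2 = π / (2 * s) + π / (4 * n) := by
    rw [← hsn]
    field_simp
    ring
  have e1 : π / (2 * s) ≤ π / (2 * t) :=
    div_le_div_of_nonneg_left hpi.le (by linarith) (by linarith)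
  have e2 : π / (4 * n) ≤ π / (4 * a) :=
    div_le_div_of_nonneg_left hpi.le (by linarith) (by linarith)
  linarith

/-- Tail case: for `a ≤ n` with `r ≤ √a`, a rational bound. -/
lemma stmt_6_tail (n a r c : ℝ) (ha : 1 ≤ a) (han : a ≤ n) (hr : 1 ≤ r) (hra : r ^ 2 ≤ a)
    (hnum : 3.141593 / (2 * r) + 3.141593 / (4 * a) ≤ c) :
    Real.sin (π / n) * (Real.sqrt n + 1 / 2) / 2 ≤ c := by
  have h1 := stmt_6_lin n a ha han
  have hsq : r ≤ Real.sqrt a := by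
    nlinarith [Real.sq_sqrt (show (0:ℝ) ≤ a by linarith), Real.sqrt_nonneg a]
  have h2 : π / (2 * Real.sqrt a) ≤ 3.141593 / (2 * r) :=
    div_le_div₀ (by norm_num) Real.pi_lt_d6.le (by linarith) (by linarith)
  have h3 : π / (4 * a) ≤ 3.141593 / (4 * a) :=
    div_le_div₀ (by norm_num) Real.pi_lt_d6.le (by linarith) (le_refl _)
  linarith

/-- Cosine monotone step. -/
lemma stmt_6_cos (m b c : ℝ) (hb : 2 ≤ b) (hm : b ≤ m) (hc : c ≤ Real.cos (π / b)) :
    c ≤ Real.cos (π / m) := by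
  have hpi : 0 < π := Real.pi_pos
  have hm0 : (0:ℝ) < m := by linarith
  have key : Real.cos (π / b) ≤ Real.cos (π / m) := by
    apply Real.cos_le_cos_of_nonneg_of_le_pi (by positivity)
    · exact le_trans (div_le_self hpi.le (by linarith)) (le_refl _)
    · exact div_le_div_of_nonneg_left hpi.le (by linarith) hm
  linarith

lemma stmt_6_sin_le_poly (x : ℝ) (h0 : 0 ≤ x) (h1 : x ≤ 1) :
    Real.sin x ≤ x - x ^ 3 / 6 + x ^ 4 * (5 / 96) := by
  have hb := Real.sin_bound (x := x) (by rwa [abs_of_nonneg h0])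
  rw [abs_of_nonneg h0] at hb
  have := (abs_le.1 hb).2
  nlinarith [mul_le_mul_of_nonneg_left h1 (pow_nonneg h0 4), pow_nonneg h0 4, pow_succ x 4]

lemma stmt_6_cos_le_poly (x : ℝ) (h0 : 0 ≤ x) (h1 : x ≤ 1) :
    Real.cos x ≤ 1 - x ^ 2 / 2 + x ^ 4 * (5 / 96) := by
  have hb := Real.cos_bound (x := x) (by rwa [abs_of_nonneg h0])
  rw [abs_of_nonneg h0] at hb
  have := (abs_le.1 hb).2
  linarith

/-- Half-angle upper bound for `sin`. -/
lemma stmt_6_sin_upper (x : ℝ) (h0 : 0 ≤ x) (h1 : x ≤ 2) :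
    Real.sin x ≤ 2 * ((x / 2 - (x / 2) ^ 3 / 6 + (x / 2) ^ 4 * (5 / 96)) *
      (1 - (x / 2) ^ 2 / 2 + (x / 2) ^ 4 * (5 / 96))) := by
  have h2 : Real.sin x = 2 * (Real.sin (x / 2) * Real.cos (x / 2)) := by
    have := Real.sin_two_mul (x / 2)
    rw [show 2 * (x / 2) = x by ring] at this
    linarith
  have hs := stmt_6_sin_le_poly (x / 2) (by linarith) (by linarith)
  have hc := stmt_6_cos_le_poly (x / 2) (by linarith) (by linarith)
  have hpi3 : (3:ℝ) < π := Real.pi_gt_three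
  have hsn : 0 ≤ Real.sin (x / 2) :=
    Real.sin_nonneg_of_nonneg_of_le_pi (by linarith) (by linarith)
  have hcn : 0 ≤ Real.cos (x / 2) :=
    Real.cos_nonneg_of_neg_pi_div_two_le_of_le (by linarith) (by linarith)
  have key := mul_le_mul hs hc hcn (le_trans hsn hs)
  linarith

/-- Monotone rational bound on the half-angle polynomial. -/
lemma stmt_6_poly_mono (u l hh : ℝ) (hl : 0 ≤ l) (hlu : l ≤ u) (huh : u ≤ hh)
    (hhb : hh ≤ 1 / 2) :
    2 * ((u - u ^ 3 / 6 + u ^ 4 * (5 / 96)) * (1 - u ^ 2 / 2 + u ^ 4 * (5 / 96))) ≤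
    2 * ((hh - l ^ 3 / 6 + hh ^ 4 * (5 / 96)) * (1 - l ^ 2 / 2 + hh ^ 4 * (5 / 96))) := by
  have hu0 : 0 ≤ u := le_trans hl hlu
  have e3 : l ^ 3 ≤ u ^ 3 := pow_le_pow_left₀ hl hlu 3
  have e4 : u ^ 4 ≤ hh ^ 4 := pow_le_pow_left₀ hu0 huh 4
  have e2 : l ^ 2 ≤ u ^ 2 := pow_le_pow_left₀ hl hlu 2
  have e2' : u ^ 2 ≤ hh ^ 2 := pow_le_pow_left₀ hu0 huh 2
  have hh2 : hh ^ 2 ≤ 1 / 4 := by nlinarith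
  have hu4 : 0 ≤ u ^ 4 := by positivity
  have hl4 : 0 ≤ l ^ 4 := by positivity
  have hA : u - u ^ 3 / 6 + u ^ 4 * (5 / 96) ≤ hh - l ^ 3 / 6 + hh ^ 4 * (5 / 96) := by
    linarith
  have hB : 1 - u ^ 2 / 2 + u ^ 4 * (5 / 96) ≤ 1 - l ^ 2 / 2 + hh ^ 4 * (5 / 96) := by
    linarith
  have hB0 : 0 ≤ 1 - u ^ 2 / 2 + u ^ 4 * (5 / 96) := by nlinarith
  have hA0 : 0 ≤ hh - l ^ 3 / 6 + hh ^ 4 * (5 / 96) := by nlinarith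
  have := mul_le_mul hA hB hB0 hA0
  linarith

/-- Concrete rational bound: `sin(π/a) ≤ C` for `4 ≤ a ≤ 8`. -/
lemma stmt_6_sin_num (a C : ℝ) (ha : 4 ≤ a) (ha8 : a ≤ 8)
    (hC : 2 * ((3.141593 / (2 * a) - (3.141592 / (2 * a)) ^ 3 / 6 +
        (3.141593 / (2 * a)) ^ 4 * (5 / 96)) *
      (1 - (3.141592 / (2 * a)) ^ 2 / 2 + (3.141593 / (2 * a)) ^ 4 * (5 / 96))) ≤ C) :
    Real.sin (π / a) ≤ C := by
  have hpl : (3.141592:ℝ) < π := Real.pi_gt_d6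
  have hph : π < 3.141593 := Real.pi_lt_d6
  have ha0 : (0:ℝ) < a := by linarith
  have hx0 : 0 ≤ π / a := by positivity
  have hx2 : π / a ≤ 2 := by
    rw [div_le_iff₀ ha0]; nlinarith
  have h1 := stmt_6_sin_upper (π / a) hx0 hx2
  have hu : π / a / 2 = π / (2 * a) := by ring
  rw [hu] at h1
  have h2a : (0:ℝ) < 2 * a := by linarith
  have hlu : (3.141592:ℝ) / (2 * a) ≤ π / (2 * a) :=
    div_le_div₀ Real.pi_pos.le hpl.le h2a (le_refl _)
  have huh : π / (2 * a) ≤ (3.141593:ℝ) / (2 * a) :=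
    div_le_div₀ (by norm_num) hph.le h2a (le_refl _)
  have hmono := stmt_6_poly_mono (π / (2 * a)) (3.141592 / (2 * a)) (3.141593 / (2 * a))
    (by positivity) hlu huh (by rw [div_le_iff₀ h2a]; linarith)
  linarith

/-- For real `n, m` in the stated ranges, `cos(π/m) > sin(π/n)·(√n + 1/2)/2`. -/
theorem stmt_6 (n m : ℝ)
    (h : (4 ≤ n ∧ 8 ≤ m) ∨ (6 ≤ n ∧ 6 ≤ m) ∨ (8 ≤ n ∧ 4 ≤ m) ∨ (14 ≤ n ∧ 3 ≤ m)) :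
    Real.cos (π / m) > Real.sin (π / n) * (Real.sqrt n + 1 / 2) / 2 := by
  have hpi : 0 < π := Real.pi_pos
  rcases h with ⟨hn, hm⟩ | ⟨hn, hm⟩ | ⟨hn, hm⟩ | ⟨hn, hm⟩
  · -- n ≥ 4, m ≥ 8
    have hn0 : (0:ℝ) < n := by linarith
    have hcosv : (0.9228936:ℝ) ≤ Real.cos (π / 8) := by
      have hb := Real.one_sub_sq_div_two_le_cos (x := π / 8)
      nlinarith [Real.pi_lt_d6, Real.pi_gt_d6]
    have hcos : (0.9228936:ℝ) ≤ Real.cos (π / m) :=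
      stmt_6_cos m 8 _ (by norm_num) hm hcosv
    have hsinn : 0 ≤ Real.sin (π / n) :=
      Real.sin_nonneg_of_nonneg_of_le_pi (by positivity)
        (div_le_self hpi.le (by linarith))
    have hsq0 : 0 ≤ Real.sqrt n := Real.sqrt_nonneg n
    rcases le_or_gt n 4.4 with h44 | h44
    · -- 4 ≤ n ≤ 4.4
      have hs1 : Real.sin (π / n) ≤ Real.sin (π / 4) := by
        apply Real.sin_le_sin_of_le_of_le_pi_div_two
        · have : 0 ≤ π / n := by positivity
          linarith
        · exact div_le_div_of_nonneg_left hpi.le (by norm_num) (by norm_num)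
        · exact div_le_div_of_nonneg_left hpi.le (by norm_num) hn
      have hs2 : Real.sin (π / 4) ≤ 0.7096 :=
        stmt_6_sin_num 4 0.7096 (by norm_num) (by norm_num) (by norm_num)
      have hsq : Real.sqrt n ≤ 2.09763 := by
        nlinarith [Real.sq_sqrt hn0.le]
      nlinarith
    · rcases le_or_gt n 5.3 with h53 | h53
      · -- 4.4 < n ≤ 5.3
        have hs1 : Real.sin (π / n) ≤ Real.sin (π / 4.4) := by
          apply Real.sin_le_sin_of_le_of_le_pi_div_two
          · have : 0 ≤ π / n := by positivity
            linarith
          · exact div_le_div_of_nonneg_left hpi.le (by norm_num) (by norm_num)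
          · exact div_le_div_of_nonneg_left hpi.le (by norm_num) h44.le
        have hs2 : Real.sin (π / 4.4) ≤ 0.6565 :=
          stmt_6_sin_num 4.4 0.6565 (by norm_num) (by norm_num) (by norm_num)
        have hsq : Real.sqrt n ≤ 2.30218 := by
          nlinarith [Real.sq_sqrt hn0.le]
        nlinarith
      · -- n > 5.3
        have := stmt_6_tail n 5.3 2.3021 0.83058 (by norm_num) h53.le (by norm_num)
          (by norm_num) (by norm_num)
        linarith
  · -- n ≥ 6, m ≥ 6
    have hcosv : (0.866:ℝ) ≤ Real.cos (π / 6) := by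
      rw [Real.cos_pi_div_six]
      nlinarith [Real.sq_sqrt (show (0:ℝ) ≤ 3 by norm_num), Real.sqrt_nonneg 3]
    have hcos : (0.866:ℝ) ≤ Real.cos (π / m) :=
      stmt_6_cos m 6 _ (by norm_num) hm hcosv
    have := stmt_6_tail n 6 2.4494 0.77220 (by norm_num) hn (by norm_num)
      (by norm_num) (by norm_num)
    linarith
  · -- n ≥ 8, m ≥ 4
    have hcosv : (0.7071:ℝ) ≤ Real.cos (π / 4) := by
      rw [Real.cos_pi_div_four]
      nlinarith [Real.sq_sqrt (show (0:ℝ) ≤ 2 by norm_num), Real.sqrt_nonneg 2]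
    have hcos : (0.7071:ℝ) ≤ Real.cos (π / m) :=
      stmt_6_cos m 4 _ (by norm_num) hm hcosv
    have := stmt_6_tail n 8 2.8284 0.65358 (by norm_num) hn (by norm_num)
      (by norm_num) (by norm_num)
    linarith
  · -- n ≥ 14, m ≥ 3
    have hcosv : (0.5:ℝ) ≤ Real.cos (π / 3) := by
      rw [Real.cos_pi_div_three]; norm_num
    have hcos : (0.5:ℝ) ≤ Real.cos (π / m) :=
      stmt_6_cos m 3 _ (by norm_num) hm hcosv
    have := stmt_6_tail n 14 3.7416 0.47595 (by norm_num) hn (by norm_num)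
      (by norm_num) (by norm_num)
    linarith
end

section
/- For all pairs of natural numbers (n, m) satisfying either n ≥ 5 and m ≥ 6, or n ≥ 7 and m ≥ 4, the inequality sin(π/m)·cosh(a_{n,m}) > cosh(log n) holds, where a_{n,m} = arccosh(cos(π/m)/sin(π/n)) + arccosh(cot(π/m)·cot(π/n)) and arccosh(x) = log(x + √(x² − 1)). -/
open Real

lemma cosh_arccosh' {x : ℝ} (hx : 1 ≤ x) : Real.cosh (arccosh x) = x := by
  have h0 : (0:ℝ) ≤ x ^ 2 - 1 := by nlinarith
  have hs : Real.sqrt (x ^ 2 - 1) ^ 2 = x ^ 2 - 1 := Real.sq_sqrt h0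
  have hs0 : 0 ≤ Real.sqrt (x ^ 2 - 1) := Real.sqrt_nonneg _
  have hX : 0 < x + Real.sqrt (x ^ 2 - 1) := by nlinarith
  have hinv : (x + Real.sqrt (x ^ 2 - 1))⁻¹ = x - Real.sqrt (x ^ 2 - 1) :=
    inv_eq_of_mul_eq_one_right (by nlinarith)
  rw [arccosh, Real.cosh_log hX, hinv]; ring

lemma sinh_arccosh' {x : ℝ} (hx : 1 ≤ x) :
    Real.sinh (arccosh x) = Real.sqrt (x ^ 2 - 1) := by
  have h0 : (0:ℝ) ≤ x ^ 2 - 1 := by nlinarith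
  have hs : Real.sqrt (x ^ 2 - 1) ^ 2 = x ^ 2 - 1 := Real.sq_sqrt h0
  have hs0 : 0 ≤ Real.sqrt (x ^ 2 - 1) := Real.sqrt_nonneg _
  have hX : 0 < x + Real.sqrt (x ^ 2 - 1) := by nlinarith
  have hinv : (x + Real.sqrt (x ^ 2 - 1))⁻¹ = x - Real.sqrt (x ^ 2 - 1) :=
    inv_eq_of_mul_eq_one_right (by nlinarith)
  rw [arccosh, Real.sinh_log hX, hinv]; ring

lemma sqrt_two_ge : (1.4:ℝ) ≤ Real.sqrt 2 := by
  nlinarith [Real.sq_sqrt (show (0:ℝ) ≤ 2 by norm_num), Real.sqrt_nonneg (2:ℝ)]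

lemma sqrt_two_sq_aux {c : ℝ} (hc : Real.sqrt 2 / 2 ≤ c) : (1:ℝ)/2 ≤ c ^ 2 := by
  nlinarith [Real.sq_sqrt (show (0:ℝ) ≤ 2 by norm_num), Real.sqrt_nonneg (2:ℝ)]

lemma sqrt_three_sq_aux {c : ℝ} (hc : Real.sqrt 3 / 2 ≤ c) : (3:ℝ)/4 ≤ c ^ 2 := by
  nlinarith [Real.sq_sqrt (show (0:ℝ) ≤ 3 by norm_num), Real.sqrt_nonneg (3:ℝ)]

lemma one_sub_cos_lt {t : ℝ} (ht : 0 < t) (htpi : t < π) : 1 - Real.cos t < t ^ 2 / 2 := by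
  have q : Real.cos (t / 2) ^ 2 = 1 / 2 + Real.cos (2 * (t / 2)) / 2 := Real.cos_sq (t / 2)
  have q2 : (2:ℝ) * (t / 2) = t := by ring
  rw [q2] at q
  have p2 : Real.sin (t / 2) ^ 2 + Real.cos (t / 2) ^ 2 = 1 := Real.sin_sq_add_cos_sq _
  have hs2 : Real.sin (t / 2) < t / 2 := Real.sin_lt (by linarith)
  have hs2' : 0 < Real.sin (t / 2) := Real.sin_pos_of_pos_of_lt_pi (by linarith) (by linarith)
  nlinarith

lemma big_aux1 {N c P : ℝ} (hN : 5 ≤ N) (hc : 3/4 ≤ c) (hP : P < 9.9225) :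
    P * (N + 1) ^ 2 < c * (4 * N ^ 3) := by
  have h1 : P * (N + 1) ^ 2 < 9.9225 * (N + 1) ^ 2 :=
    mul_lt_mul_of_pos_right hP (by positivity)
  have h2 : (3/4 : ℝ) * (4 * N ^ 3) ≤ c * (4 * N ^ 3) :=
    mul_le_mul_of_nonneg_right hc (by positivity)
  nlinarith [sq_nonneg (N - 5), mul_nonneg (sq_nonneg (N - 5)) (show (0:ℝ) ≤ N by linarith)]

lemma big_aux2 {N c P : ℝ} (hN : 7 ≤ N) (hc : 1/2 ≤ c) (hP : P < 9.9225) :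
    P * (N + 1) ^ 2 < c * (4 * N ^ 3) := by
  have h1 : P * (N + 1) ^ 2 < 9.9225 * (N + 1) ^ 2 :=
    mul_lt_mul_of_pos_right hP (by positivity)
  have h2 : (1/2 : ℝ) * (4 * N ^ 3) ≤ c * (4 * N ^ 3) :=
    mul_le_mul_of_nonneg_right hc (by positivity)
  nlinarith [sq_nonneg (N - 7), mul_nonneg (sq_nonneg (N - 7)) (show (0:ℝ) ≤ N by linarith)]

set_option maxHeartbeats 1000000 in
/-- Proposition 3.9 (odd case): for natural numbers `(n, m)` with `n ≥ 5, m ≥ 6` or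
`n ≥ 7, m ≥ 4`, we have `sin(π/m)·cosh(a_{n,m}) > cosh(log n)`, where
`a_{n,m} = arccosh(cos(π/m)/sin(π/n)) + arccosh(cot(π/m)·cot(π/n))`. -/
theorem stmt_8 (n m : ℕ)
    (h : (5 ≤ n ∧ 6 ≤ m) ∨ (7 ≤ n ∧ 4 ≤ m)) :
    Real.sin (π / m) *
      Real.cosh (arccosh (Real.cos (π / m) / Real.sin (π / n)) +
        arccosh (Real.cot (π / m) * Real.cot (π / n))) >
    Real.cosh (Real.log n) := by
  have hpi : π < 3.15 := Real.pi_lt_d2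
  have hpi0 : 0 < π := Real.pi_pos
  have hpisq : π ^ 2 < 9.9225 := by nlinarith
  have hN5 : (5:ℝ) ≤ (n:ℝ) := by
    rcases h with ⟨h1, _⟩ | ⟨h1, _⟩ <;> exact_mod_cast le_trans (by norm_num) (Nat.cast_le.mpr h1)
  have hM4 : (4:ℝ) ≤ (m:ℝ) := by
    rcases h with ⟨_, h1⟩ | ⟨_, h1⟩ <;> exact_mod_cast le_trans (by norm_num) (Nat.cast_le.mpr h1)
  set N : ℝ := (n:ℝ) with hNdef
  set M : ℝ := (m:ℝ) with hMdef
  have hN0 : 0 < N := by linarith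
  have hM0 : 0 < M := by linarith
  set t : ℝ := π / N with htdef
  set u : ℝ := π / M with hudef
  have ht0 : 0 < t := div_pos hpi0 hN0
  have hu0 : 0 < u := div_pos hpi0 hM0
  have ht5 : t ≤ π / 5 := div_le_div_of_nonneg_left hpi0.le (by norm_num) hN5
  have hu4 : u ≤ π / 4 := div_le_div_of_nonneg_left hpi0.le (by norm_num) hM4
  have htpi : t < π := by linarith only [ht5, hpi0]
  have hupi : u < π := by linarith only [hu4, hpi0]
  set st := Real.sin t with hstdef
  set ct := Real.cos t with hctdef
  set su := Real.sin u with hsudef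
  set cu := Real.cos u with hcudef
  have hst0 : 0 < st := Real.sin_pos_of_pos_of_lt_pi ht0 htpi
  have hsu0 : 0 < su := Real.sin_pos_of_pos_of_lt_pi hu0 hupi
  have pt : st ^ 2 + ct ^ 2 = 1 := Real.sin_sq_add_cos_sq t
  have pu : su ^ 2 + cu ^ 2 = 1 := Real.sin_sq_add_cos_sq u
  have hcu : Real.sqrt 2 / 2 ≤ cu := by
    rw [hcudef, ← Real.cos_pi_div_four]
    exact Real.cos_le_cos_of_nonneg_of_le_pi hu0.le (by linarith) hu4
  have hstlt : st < t := Real.sin_lt ht0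
  have hstcu : st ≤ cu := by linarith only [hstlt, ht5, hpi, hcu, sqrt_two_ge]
  have hx1 : 1 ≤ cu / st := (one_le_div hst0).mpr hstcu
  have hcot : Real.cot u * Real.cot t = cu * ct / (su * st) := by
    rw [Real.cot_eq_cos_div_sin, Real.cot_eq_cos_div_sin, div_mul_div_comm]
  have hcosadd : 0 ≤ cu * ct - su * st := by
    have h1 : 0 ≤ Real.cos (u + t) := by
      apply Real.cos_nonneg_of_mem_Icc
      constructor
      · linarith
      · linarith
    rw [Real.cos_add] at h1; linarith only [h1]
  have hy1 : 1 ≤ cu * ct / (su * st) := by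
    rw [le_div_iff₀ (by positivity)]
    linarith only [hcosadd]
  have hC0 : (0:ℝ) ≤ cu ^ 2 - st ^ 2 := by
    have := pow_le_pow_left₀ hst0.le hstcu 2
    linarith only [this]
  have hCC : Real.sqrt (cu ^ 2 - st ^ 2) * Real.sqrt (cu ^ 2 - st ^ 2) = cu ^ 2 - st ^ 2 :=
    Real.mul_self_sqrt hC0
  have hsx : Real.sqrt ((cu / st) ^ 2 - 1) = Real.sqrt (cu ^ 2 - st ^ 2) / st := by
    have e : (cu / st) ^ 2 - 1 = (cu ^ 2 - st ^ 2) / st ^ 2 := by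
      field_simp
    rw [e, Real.sqrt_div hC0, Real.sqrt_sq hst0.le]
  have hsy : Real.sqrt ((cu * ct / (su * st)) ^ 2 - 1)
      = Real.sqrt (cu ^ 2 - st ^ 2) / (su * st) := by
    have e : (cu * ct / (su * st)) ^ 2 - 1 = (cu ^ 2 - st ^ 2) / (su * st) ^ 2 := by
      rw [div_pow, div_sub_one (by positivity)]
      congr 1
      rw [mul_pow]
      linear_combination cu ^ 2 * pt - st ^ 2 * pu
    rw [e, Real.sqrt_div hC0, Real.sqrt_sq (by positivity)]
  have key : Real.cosh (arccosh (cu / st) + arccosh (cu * ct / (su * st)))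
      = (cu / st) * (cu * ct / (su * st))
        + (Real.sqrt (cu ^ 2 - st ^ 2) / st) * (Real.sqrt (cu ^ 2 - st ^ 2) / (su * st)) := by
    rw [Real.cosh_add, cosh_arccosh' hx1, cosh_arccosh' hy1,
      sinh_arccosh' hx1, sinh_arccosh' hy1, hsx, hsy]
  have e1 : (Real.sqrt (cu ^ 2 - st ^ 2) / st) * (Real.sqrt (cu ^ 2 - st ^ 2) / (su * st))
      = (cu ^ 2 - st ^ 2) / (su * st ^ 2) := by
    rw [div_mul_div_comm, hCC]
    congr 1
    ring
  have hLHS : su * Real.cosh (arccosh (cu / st) + arccosh (cu * ct / (su * st)))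
      = (cu ^ 2 * ct + cu ^ 2 - st ^ 2) / st ^ 2 := by
    rw [key, e1]
    field_simp
    ring
  have hRHS : Real.cosh (Real.log N) = (N ^ 2 + 1) / (2 * N) := by
    rw [Real.cosh_log hN0]
    field_simp
  have hhalf : 1 - ct < t ^ 2 / 2 := one_sub_cos_lt ht0 htpi
  have hbig : π ^ 2 * (N + 1) ^ 2 < cu ^ 2 * (4 * N ^ 3) := by
    rcases h with ⟨_, hm6⟩ | ⟨hn7, _⟩
    · have hM6 : (6:ℝ) ≤ M := by
        rw [hMdef]; exact_mod_cast le_trans (by norm_num) (Nat.cast_le.mpr hm6)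
      have hu6 : u ≤ π / 6 := div_le_div_of_nonneg_left hpi0.le (by norm_num) hM6
      have hcu6 : Real.sqrt 3 / 2 ≤ cu := by
        rw [hcudef, ← Real.cos_pi_div_six]
        exact Real.cos_le_cos_of_nonneg_of_le_pi hu0.le (by linarith) hu6
      exact big_aux1 hN5 (sqrt_three_sq_aux hcu6) hpisq
    · have hN7 : (7:ℝ) ≤ N := by
        rw [hNdef]; exact_mod_cast le_trans (by norm_num) (Nat.cast_le.mpr hn7)
      have hcu2 : (1:ℝ)/2 ≤ cu ^ 2 := sqrt_two_sq_aux hcu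
      exact big_aux2 hN7 hcu2 hpisq
  have hmain : (1 - ct) * (N + 1) ^ 2 < cu ^ 2 * (2 * N) := by
    have ht2 : t ^ 2 = π ^ 2 / N ^ 2 := by rw [htdef]; field_simp
    have hD : (1 - ct) * (2 * N ^ 2) < π ^ 2 := by
      rw [ht2, div_div] at hhalf
      rw [lt_div_iff₀ (by positivity)] at hhalf
      linarith only [hhalf]
    have h1 : ((1 - ct) * (N + 1) ^ 2) * (2 * N ^ 2) < (cu ^ 2 * (2 * N)) * (2 * N ^ 2) := by
      have hA := mul_lt_mul_of_pos_right hD (show (0:ℝ) < (N + 1) ^ 2 by positivity)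
      linarith only [hA, hbig]
    exact (mul_lt_mul_iff_left₀ (show (0:ℝ) < 2 * N ^ 2 by positivity)).mp h1
  have hctpos : 0 < ct := by
    rw [hctdef]
    apply Real.cos_pos_of_mem_Ioo
    constructor
    · linarith
    · linarith
  rw [hcot, hLHS, hRHS, gt_iff_lt, div_lt_div_iff₀ (by positivity) (by positivity)]
  have hst2 : st ^ 2 = 1 - ct ^ 2 := by linarith only [pt]
  rw [hst2]
  have h2 := mul_lt_mul_of_pos_right hmain (show (0:ℝ) < 1 + ct by linarith only [hctpos])
  linarith only [h2]
end

section
/- Define g(n, m) = cos(π/m)·cot(π/n)·√(cos²(π/m)/sin²(π/n) − 1) + (cos(π/m)/sin(π/n))·√(cos²(π/m)·cot²(π/n) − sin²(π/m)) for real n, m ≥ 3 with 1/n + 1/m < 1/2. Then g is strictly increasing in each variable: if 3 ≤ n < n′ and 3 ≤ m < m′ with 1/n + 1/m < 1/2, then g(n, m) < g(n′, m) and g(n, m) < g(n, m′). -/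
open Real

/-- The expansion `g(n, m)` of `sin(π/m)·cosh(a_{n,m})`. -/
noncomputable def g (n m : ℝ) : ℝ :=
  Real.cos (π / m) * Real.cot (π / n) *
      Real.sqrt (Real.cos (π / m) ^ 2 / Real.sin (π / n) ^ 2 - 1) +
    Real.cos (π / m) / Real.sin (π / n) *
      Real.sqrt (Real.cos (π / m) ^ 2 * Real.cot (π / n) ^ 2 - Real.sin (π / m) ^ 2)

lemma g_eq (n m : ℝ) (hx0 : 0 < π / n) (hx2 : π / n < π / 2) :
    g n m = Real.cos (π / m) * Real.sqrt (Real.cos (π / n) ^ 2 - Real.sin (π / m) ^ 2)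
      / (1 - Real.cos (π / n)) := by
  set x := π / n with hxdef
  set y := π / m with hydef
  have hs : 0 < Real.sin x := Real.sin_pos_of_pos_of_lt_pi hx0 (by linarith [Real.pi_pos])
  have hc1 : Real.cos x < 1 := by
    have := Real.cos_lt_cos_of_nonneg_of_le_pi (le_refl 0) (by linarith [Real.pi_pos]) hx0
    simpa using this
  have hpyx := Real.sin_sq_add_cos_sq x
  have hpyy := Real.sin_sq_add_cos_sq y
  have h1 : Real.cos y ^ 2 / Real.sin x ^ 2 - 1
      = (Real.cos x ^ 2 - Real.sin y ^ 2) / Real.sin x ^ 2 := by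
    rw [div_sub_one (by positivity)]
    congr 1
    nlinarith
  have h2 : Real.cos y ^ 2 * Real.cot x ^ 2 - Real.sin y ^ 2
      = (Real.cos x ^ 2 - Real.sin y ^ 2) / Real.sin x ^ 2 := by
    rw [Real.cot_eq_cos_div_sin]
    field_simp
    nlinarith
  have hsq : Real.sqrt ((Real.cos x ^ 2 - Real.sin y ^ 2) / Real.sin x ^ 2)
      = Real.sqrt (Real.cos x ^ 2 - Real.sin y ^ 2) / Real.sin x := by
    rw [show (Real.cos x ^ 2 - Real.sin y ^ 2) / Real.sin x ^ 2
        = (Real.cos x ^ 2 - Real.sin y ^ 2) * ((Real.sin x)⁻¹) ^ 2 by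
      field_simp]
    rw [Real.sqrt_mul' _ (by positivity), Real.sqrt_sq (by positivity)]
    ring
  unfold g
  rw [← hxdef, ← hydef, h1, h2, hsq, Real.cot_eq_cos_div_sin]
  have h1c : 1 - Real.cos x ≠ 0 := by linarith
  field_simp
  linear_combination (-(Real.cos y * Real.sqrt (Real.cos x ^ 2 - Real.sin y ^ 2))) * hpyx

/-- `g` is strictly increasing in each variable on the region `n, m ≥ 3`,
`1/n + 1/m < 1/2`. -/
theorem stmt_10 (n n' m m' : ℝ) (hn : 3 ≤ n) (hm : 3 ≤ m)
    (hhyp : 1 / n + 1 / m < 1 / 2) :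
    (n < n' → g n m < g n' m) ∧ (m < m' → g n m < g n m') := by
  have hpi := Real.pi_pos
  have hn0 : (0:ℝ) < n := by linarith
  have hm0 : (0:ℝ) < m := by linarith
  have hx0 : 0 < π / n := by positivity
  have hy0 : 0 < π / m := by positivity
  have hxy : π / n + π / m < π / 2 := by
    have : π * (1 / n + 1 / m) < π * (1 / 2) := by
      exact mul_lt_mul_of_pos_left hhyp hpi
    calc π / n + π / m = π * (1 / n + 1 / m) := by ring
      _ < π * (1 / 2) := this
      _ = π / 2 := by ring
  have hx2 : π / n < π / 2 := by linarith
  have hy2 : π / m < π / 2 := by linarith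
  -- positivity of the key quantity cos x ^ 2 - sin y ^ 2 for x + y < π/2
  have key : ∀ x y : ℝ, 0 < x → 0 < y → x + y < π / 2 →
      Real.sin y ^ 2 < Real.cos x ^ 2 := by
    intro x y hx hy hxy'
    have hsy : 0 < Real.sin y :=
      Real.sin_pos_of_pos_of_lt_pi hy (by linarith)
    have : Real.sin y < Real.cos x := by
      have h := Real.cos_lt_cos_of_nonneg_of_le_pi (by linarith : (0:ℝ) ≤ x)
        (by linarith : π / 2 - y ≤ π) (by linarith : x < π / 2 - y)
      rwa [Real.cos_pi_div_two_sub] at h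
    nlinarith
  constructor
  · intro hnn'
    have hn'0 : (0:ℝ) < n' := by linarith
    have hx'0 : 0 < π / n' := by positivity
    have hx'x : π / n' < π / n := by
      apply div_lt_div_of_pos_left hpi hn0 hnn'
    rw [g_eq n m hx0 hx2, g_eq n' m hx'0 (by linarith)]
    have hcy : 0 < Real.cos (π / m) := Real.cos_pos_of_mem_Ioo ⟨by linarith, hy2⟩
    have hcc : Real.cos (π / n) < Real.cos (π / n') :=
      Real.cos_lt_cos_of_nonneg_of_le_pi (le_of_lt hx'0) (by linarith) hx'x
    have hc1 : Real.cos (π / n) < 1 := by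
      have := Real.cos_lt_cos_of_nonneg_of_le_pi (le_refl 0) (by linarith) hx0
      simpa using this
    have hc1' : Real.cos (π / n') < 1 := by
      have := Real.cos_lt_cos_of_nonneg_of_le_pi (le_refl 0) (by linarith) hx'0
      simpa using this
    have hA : Real.sin (π / m) ^ 2 < Real.cos (π / n) ^ 2 := key _ _ hx0 hy0 hxy
    have hA' : Real.cos (π / n) ^ 2 < Real.cos (π / n') ^ 2 := by
      have h0 : 0 < Real.cos (π / n) := Real.cos_pos_of_mem_Ioo ⟨by linarith, hx2⟩
      nlinarith
    apply div_lt_div₀ (by gcongr) (by linarith) (by positivity) (by linarith)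
  · intro hmm'
    have hm'0 : (0:ℝ) < m' := by linarith
    have hy'0 : 0 < π / m' := by positivity
    have hy'y : π / m' < π / m := by
      apply div_lt_div_of_pos_left hpi hm0 hmm'
    rw [g_eq n m hx0 hx2, g_eq n m' hx0 hx2]
    have hcy : 0 < Real.cos (π / m) := Real.cos_pos_of_mem_Ioo ⟨by linarith, hy2⟩
    have hcc : Real.cos (π / m) < Real.cos (π / m') :=
      Real.cos_lt_cos_of_nonneg_of_le_pi (le_of_lt hy'0) (by linarith) hy'y
    have hsy' : 0 < Real.sin (π / m') :=
      Real.sin_pos_of_pos_of_lt_pi hy'0 (by linarith)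
    have hss : Real.sin (π / m') < Real.sin (π / m) := by
      apply Real.sin_lt_sin_of_lt_of_le_pi_div_two (by linarith) (le_of_lt hy2) hy'y
    have hA : Real.sin (π / m) ^ 2 < Real.cos (π / n) ^ 2 := key _ _ hx0 hy0 hxy
    have hA2 : Real.sin (π / m') ^ 2 < Real.sin (π / m) ^ 2 := by nlinarith
    have hc1 : Real.cos (π / n) < 1 := by
      have := Real.cos_lt_cos_of_nonneg_of_le_pi (le_refl 0) (by linarith) hx0
      simpa using this
    rw [div_lt_div_iff_of_pos_right (by linarith)]
    apply mul_lt_mul'' hcc (by gcongr) (le_of_lt hcy) (Real.sqrt_nonneg _)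
end

section
/- The function g_L(n, m) = 2·cos²(π/m) − (1/2)·sin(π/n) − (1/2)·sin(2π/m)·tan(π/n) is strictly increasing in each of its variables on the region of real numbers n ≥ 3, m ≥ 4: if 3 ≤ n < n′ and 4 ≤ m < m′, then g_L(n, m) < g_L(n′, m) and g_L(n, m) < g_L(n, m′). -/
open Real

/-- The left-hand side `g_L(n, m)` of the reduced odd-case inequality. -/
noncomputable def gL (n m : ℝ) : ℝ :=
  2 * Real.cos (π / m) ^ 2 - 1 / 2 * Real.sin (π / n) -
    1 / 2 * Real.sin (2 * π / m) * Real.tan (π / n)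

/-- `g_L` is strictly increasing in each variable on the region `n ≥ 3`, `m ≥ 4`. -/
theorem stmt_11 (n n' m m' : ℝ) (hn : 3 ≤ n) (hm : 4 ≤ m) :
    (n < n' → gL n m < gL n' m) ∧ (m < m' → gL n m < gL n m') := by
  have hπ := Real.pi_pos
  have hn0 : (0:ℝ) < n := by linarith
  have hm0 : (0:ℝ) < m := by linarith
  have hπn_pos : 0 < π / n := div_pos hπ hn0
  have hπn_le : π / n ≤ π / 3 := div_le_div_of_nonneg_left hπ.le (by norm_num) hn
  have hπn_lt : π / n < π / 2 := lt_of_le_of_lt hπn_le (by linarith)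
  have h2πm_pos : 0 < 2 * π / m := by positivity
  have h2πm_le : 2 * π / m ≤ π / 2 := by
    rw [div_le_div_iff₀ hm0 (by norm_num)]
    nlinarith
  have hπm_pos : 0 < π / m := div_pos hπ hm0
  have hπm_lt : π / m < π / 2 := by
    have : π / m ≤ π / 4 := div_le_div_of_nonneg_left hπ.le (by norm_num) hm
    linarith
  have hsin2m_nonneg : 0 ≤ Real.sin (2 * π / m) :=
    Real.sin_nonneg_of_nonneg_of_le_pi h2πm_pos.le (by linarith)
  have htan_pos : 0 < Real.tan (π / n) := Real.tan_pos_of_pos_of_lt_pi_div_two hπn_pos hπn_lt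
  constructor
  · intro hnn'
    have hn'0 : (0:ℝ) < n' := by linarith
    have h1 : π / n' < π / n := div_lt_div_of_pos_left hπ hn0 hnn'
    have hπn'_pos : 0 < π / n' := div_pos hπ hn'0
    have hsin : Real.sin (π / n') < Real.sin (π / n) := by
      apply Real.strictMonoOn_sin ⟨by linarith, by linarith⟩ ⟨by linarith, by linarith⟩ h1
    have htan : Real.tan (π / n') < Real.tan (π / n) :=
      Real.tan_lt_tan_of_nonneg_of_lt_pi_div_two hπn'_pos.le hπn_lt h1
    have hmul : Real.sin (2 * π / m) * Real.tan (π / n') ≤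
        Real.sin (2 * π / m) * Real.tan (π / n) :=
      mul_le_mul_of_nonneg_left htan.le hsin2m_nonneg
    unfold gL
    nlinarith
  · intro hmm'
    have hm'0 : (0:ℝ) < m' := by linarith
    have h1 : π / m' < π / m := div_lt_div_of_pos_left hπ hm0 hmm'
    have h2 : 2 * π / m' < 2 * π / m := div_lt_div_of_pos_left (by linarith) hm0 hmm'
    have hcos : Real.cos (π / m) < Real.cos (π / m') :=
      Real.strictAntiOn_cos ⟨by positivity, by linarith⟩ ⟨by linarith, by linarith⟩ h1
    have hcos_pos : 0 < Real.cos (π / m) := Real.cos_pos_of_mem_Ioo ⟨by linarith, hπm_lt⟩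
    have hcossq : Real.cos (π / m) ^ 2 < Real.cos (π / m') ^ 2 := by
      nlinarith
    have hsin : Real.sin (2 * π / m') < Real.sin (2 * π / m) := by
      have h2πm'_pos : 0 < 2 * π / m' := by positivity
      apply Real.strictMonoOn_sin ⟨by linarith, by linarith⟩ ⟨by linarith, by linarith⟩ h2
    have hmul : Real.sin (2 * π / m') * Real.tan (π / n) <
        Real.sin (2 * π / m) * Real.tan (π / n) :=
      mul_lt_mul_of_pos_right hsin htan_pos
    unfold gL
    nlinarith
end

section
/- The function g_R(n) = sin²(π/n)·(n + 1)/(2·cos(π/n)) is strictly decreasing in n on the real interval [4, ∞). -/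
open Real

private lemma cos_pos_aux {x : ℝ} (hx : 4 ≤ x) : 0 < Real.cos (π / x) := by
  have hx0 : (0:ℝ) < x := by linarith
  apply Real.cos_pos_of_mem_Ioo
  constructor
  · have : 0 < π / x := div_pos Real.pi_pos hx0
    linarith [Real.pi_pos]
  · have : π / x ≤ π / 4 := by
      apply div_le_div_of_nonneg_left Real.pi_pos.le (by norm_num) hx
    linarith [Real.pi_pos]

private lemma sin_pos_aux {x : ℝ} (hx : 4 ≤ x) : 0 < Real.sin (π / x) := by
  have hx0 : (0:ℝ) < x := by linarith
  apply Real.sin_pos_of_pos_of_lt_pi (div_pos Real.pi_pos hx0)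
  have : π / x ≤ π / 4 := by
    apply div_le_div_of_nonneg_left Real.pi_pos.le (by norm_num) hx
  linarith [Real.pi_pos]

private lemma hasDerivAt_aux {x : ℝ} (hx : 4 ≤ x) :
    HasDerivAt (fun n : ℝ => Real.sin (π / n) ^ 2 * (n + 1) / (2 * Real.cos (π / n)))
      ((((2 * Real.sin (π / x) ^ 1 * (Real.cos (π / x) * ((0 * x - π * 1) / x ^ 2))) * (x + 1)
          + Real.sin (π / x) ^ 2 * 1) * (2 * Real.cos (π / x))
        - Real.sin (π / x) ^ 2 * (x + 1)
            * (2 * (-Real.sin (π / x) * ((0 * x - π * 1) / x ^ 2))))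
        / (2 * Real.cos (π / x)) ^ 2) x := by
  have hx0 : x ≠ 0 := by intro h; rw [h] at hx; norm_num at hx
  have h1 : HasDerivAt (fun n : ℝ => π / n) ((0 * x - π * 1) / x ^ 2) x :=
    (hasDerivAt_const x π).div (hasDerivAt_id x) hx0
  have h2 := (Real.hasDerivAt_sin (π / x)).comp x h1
  have h3 := h2.pow 2
  have h4 : HasDerivAt (fun n : ℝ => n + 1) 1 x := by
    simpa using (hasDerivAt_id x).add_const 1
  have h5 := h3.mul h4
  have h6 := ((Real.hasDerivAt_cos (π / x)).comp x h1).const_mul 2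
  have hc : (2 : ℝ) * Real.cos (π / x) ≠ 0 := by
    have := cos_pos_aux hx; positivity
  have h8 := h5.div h6 hc
  refine h8.congr_deriv ?_; simp only [Function.comp_apply, Pi.pow_apply, Pi.mul_apply]; ring

/-- The function `g_R(n) = sin²(π/n)·(n + 1)/(2·cos(π/n))` is strictly decreasing
on `[4, ∞)`. -/
theorem stmt_12 :
    StrictAntiOn (fun n : ℝ => Real.sin (π / n) ^ 2 * (n + 1) / (2 * Real.cos (π / n)))
      (Set.Ici (4 : ℝ)) := by
  apply strictAntiOn_of_deriv_neg (convex_Ici 4)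
  · apply ContinuousOn.div
    · apply ContinuousOn.mul
      · apply ContinuousOn.pow
        apply Real.continuous_sin.comp_continuousOn
        apply ContinuousOn.div continuousOn_const continuousOn_id
        intro x hx h
        simp only [id_eq] at h
        have h4 : (4:ℝ) ≤ x := hx
        rw [h] at h4; norm_num at h4
      · exact (continuousOn_id.add continuousOn_const)
    · apply ContinuousOn.mul continuousOn_const
      apply Real.continuous_cos.comp_continuousOn
      apply ContinuousOn.div continuousOn_const continuousOn_id
      intro x hx h
      simp only [id_eq] at h
      have h4 : (4:ℝ) ≤ x := hx
      rw [h] at h4; norm_num at h4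
    · intro x hx
      have hx4 : (4:ℝ) ≤ x := hx
      have := cos_pos_aux hx4
      positivity
  · intro x hx
    rw [interior_Ici] at hx
    have hx4 : (4:ℝ) ≤ x := le_of_lt hx
    have hx0 : (0:ℝ) < x := by linarith
    rw [(hasDerivAt_aux hx4).deriv]
    set s := Real.sin (π / x) with hs
    set c := Real.cos (π / x) with hc
    have hspos : 0 < s := sin_pos_aux hx4
    have hcpos : 0 < c := cos_pos_aux hx4
    have hc1 : c ≤ 1 := Real.cos_le_one _
    have hsx : s < π / x := Real.sin_lt (div_pos Real.pi_pos hx0)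
    have hsx' : s * x < π := (lt_div_iff₀ hx0).mp hsx
    apply div_neg_of_neg_of_pos
    · have hpi := Real.pi_pos
      have hx2 : (0:ℝ) < x ^ 2 := by positivity
      have key : c * s * x ^ 2 < π * (x + 1) * (1 + c ^ 2) := by
        have h1 : c * s * x ^ 2 ≤ s * x ^ 2 := by nlinarith [mul_nonneg (mul_nonneg (sub_nonneg.mpr hc1) hspos.le) hx2.le]
        have h2 : s * x ^ 2 < π * x := by nlinarith
        have h3 : π * x ≤ π * (x + 1) := by nlinarith
        have h4 : π * (x + 1) ≤ π * (x + 1) * (1 + c ^ 2) := by nlinarith [mul_nonneg (mul_nonneg hpi.le (by linarith : (0:ℝ) ≤ x + 1)) (sq_nonneg c)]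
        linarith
      have hpyth : s ^ 2 + c ^ 2 = 1 := Real.sin_sq_add_cos_sq _
      have expand : (2 * s ^ 1 * (c * ((0 * x - π * 1) / x ^ 2)) * (x + 1) + s ^ 2 * 1)
            * (2 * c) - s ^ 2 * (x + 1) * (2 * (-s * ((0 * x - π * 1) / x ^ 2)))
          = (2 * s / x ^ 2) * (c * s * x ^ 2 - π * (x + 1) * (2 * c ^ 2 + s ^ 2)) := by
        field_simp
        ring
      rw [expand]
      apply mul_neg_of_pos_of_neg
      · positivity
      · have h2 : 2 * c ^ 2 + s ^ 2 = 1 + c ^ 2 := by linarith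
        rw [h2]; linarith
    · positivity
end

section
/- For all real numbers n, m satisfying one of: n ≥ 5 and m ≥ 10; n ≥ 7 and m ≥ 5; or n ≥ 9 and m ≥ 4, the inequality 2·cos²(π/m) − (1/2)·sin(π/n) − (1/2)·sin(2π/m)·tan(π/n) > sin²(π/n)·(n + 1)/(2·cos(π/n)) holds. -/
open Real Set

lemma my_sin_le (x : ℝ) (hx : 0 ≤ x) : Real.sin x ≤ x := by
  rcases eq_or_lt_of_le hx with h | h
  · simp [← h]
  · exact (Real.sin_lt h).le

lemma my_sin_ge (x : ℝ) (hx : 0 ≤ x) : x - x^3/6 ≤ Real.sin x := by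
  have H : MonotoneOn (fun t => Real.sin t - (t - t^3/6)) (Set.Ici 0) := by
    apply monotoneOn_of_deriv_nonneg (convex_Ici 0)
    · fun_prop
    · fun_prop
    · intro t _
      have h1 : HasDerivAt (fun t : ℝ => Real.sin t - (t - t^3/6))
          (Real.cos t - (1 - 3*t^2/6)) t := by
        exact (Real.hasDerivAt_sin t).sub
          ((hasDerivAt_id t).sub ((hasDerivAt_pow 3 t).div_const 6))
      rw [h1.deriv]
      nlinarith [Real.one_sub_sq_div_two_le_cos (x := t)]
  have := H Set.self_mem_Ici (Set.mem_Ici.2 hx) hx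
  simp only [Real.sin_zero] at this
  linarith

lemma my_cos_le (x : ℝ) (hx : 0 ≤ x) : Real.cos x ≤ 1 - x^2/2 + x^4/24 := by
  have H : MonotoneOn (fun t => (1 - t^2/2 + t^4/24) - Real.cos t) (Set.Ici 0) := by
    apply monotoneOn_of_deriv_nonneg (convex_Ici 0)
    · fun_prop
    · fun_prop
    · intro t ht
      rw [interior_Ici] at ht
      have h1 : HasDerivAt (fun t : ℝ => (1 - t^2/2 + t^4/24) - Real.cos t)
          ((0 - 2*t^1/2 + 4*t^3/24) - (-Real.sin t)) t := by
        exact ((((hasDerivAt_const t (1:ℝ)).sub ((hasDerivAt_pow 2 t).div_const 2)).add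
          ((hasDerivAt_pow 4 t).div_const 24)).sub (Real.hasDerivAt_cos t))
      rw [h1.deriv]
      nlinarith [my_sin_ge t (le_of_lt ht)]
  have := H Set.self_mem_Ici (Set.mem_Ici.2 hx) hx
  simp only [Real.cos_zero] at this
  linarith

lemma my_sin_le5 (x : ℝ) (hx : 0 ≤ x) : Real.sin x ≤ x - x^3/6 + x^5/120 := by
  have H : MonotoneOn (fun t => (t - t^3/6 + t^5/120) - Real.sin t) (Set.Ici 0) := by
    apply monotoneOn_of_deriv_nonneg (convex_Ici 0)
    · fun_prop
    · fun_prop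
    · intro t ht
      rw [interior_Ici] at ht
      have h1 : HasDerivAt (fun t : ℝ => (t - t^3/6 + t^5/120) - Real.sin t)
          ((1 - 3*t^2/6 + 5*t^4/120) - Real.cos t) t := by
        exact (((hasDerivAt_id t).sub ((hasDerivAt_pow 3 t).div_const 6)).add
          ((hasDerivAt_pow 5 t).div_const 120)).sub (Real.hasDerivAt_sin t)
      rw [h1.deriv]
      nlinarith [my_cos_le t (le_of_lt ht)]
  have := H Set.self_mem_Ici (Set.mem_Ici.2 hx) hx
  simp only [Real.sin_zero] at this
  linarith

lemma my_cos_ge (x : ℝ) (hx : 0 ≤ x) : 1 - x^2/2 + x^4/24 - x^6/720 ≤ Real.cos x := by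
  have H : MonotoneOn (fun t => Real.cos t - (1 - t^2/2 + t^4/24 - t^6/720)) (Set.Ici 0) := by
    apply monotoneOn_of_deriv_nonneg (convex_Ici 0)
    · fun_prop
    · fun_prop
    · intro t ht
      rw [interior_Ici] at ht
      have h1 : HasDerivAt (fun t : ℝ => Real.cos t - (1 - t^2/2 + t^4/24 - t^6/720))
          ((-Real.sin t) - ((0 - 2*t^1/2 + 4*t^3/24) - 6*t^5/720)) t := by
        exact (Real.hasDerivAt_cos t).sub ((((hasDerivAt_const t (1:ℝ)).sub
          ((hasDerivAt_pow 2 t).div_const 2)).add ((hasDerivAt_pow 4 t).div_const 24)).sub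
          ((hasDerivAt_pow 6 t).div_const 720))
      rw [h1.deriv]
      nlinarith [my_sin_le5 t (le_of_lt ht)]
  have := H Set.self_mem_Ici (Set.mem_Ici.2 hx) hx
  simp only [Real.cos_zero] at this
  linarith
lemma poly_sin_upper (x b S : ℝ) (h0 : 0 ≤ x) (hxb : x ≤ b) (hb : b ≤ 1)
    (hS : b - b^3/6 + b^5/120 ≤ S) : Real.sin x ≤ S := by
  have h := my_sin_le5 x h0
  have hb0 : 0 ≤ b := le_trans h0 hxb
  have hd : (b - b^3/6 + b^5/120) - (x - x^3/6 + x^5/120)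
      = (b-x)*(1 - (b^2+b*x+x^2)/6 + (b^4+b^3*x+b^2*x^2+b*x^3+x^4)/120) := by ring
  have h4 : 0 ≤ b^4+b^3*x+b^2*x^2+b*x^3+x^4 := by positivity
  have hb2 : b^2 ≤ 1 := by nlinarith
  have hx2 : x^2 ≤ 1 := by nlinarith
  have hbx2 : b*x ≤ 1 := by nlinarith
  have hbr : 0 ≤ 1 - (b^2+b*x+x^2)/6 + (b^4+b^3*x+b^2*x^2+b*x^3+x^4)/120 := by linarith
  nlinarith [mul_nonneg (sub_nonneg.2 hxb) hbr]

lemma poly_cos_lower (x b C : ℝ) (h0 : 0 ≤ x) (hxb : x ≤ b) (hb : b ≤ 1)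
    (hC : C ≤ 1 - b^2/2 + b^4/24 - b^6/720) : C ≤ Real.cos x := by
  have h := my_cos_ge x h0
  have hb0 : 0 ≤ b := le_trans h0 hxb
  have hd : (1 - x^2/2 + x^4/24 - x^6/720) - (1 - b^2/2 + b^4/24 - b^6/720)
      = (b^2-x^2)*(1/2 - (b^2+x^2)/24 + (b^4+b^2*x^2+x^4)/720) := by ring
  have h4 : 0 ≤ b^4+b^2*x^2+x^4 := by positivity
  have hb2 : b^2 ≤ 1 := by nlinarith
  have hx2 : x^2 ≤ 1 := by nlinarith
  have hbr : 0 ≤ 1/2 - (b^2+x^2)/24 + (b^4+b^2*x^2+x^4)/720 := by linarith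
  have hsq : 0 ≤ b^2 - x^2 := by nlinarith
  nlinarith [mul_nonneg hsq hbr]

lemma poly_cos_upper (x a C : ℝ) (h0 : 0 ≤ a) (hax : a ≤ x) (hx1 : x ≤ 1)
    (hC : 1 - a^2/2 + a^4/24 ≤ C) : Real.cos x ≤ C := by
  have h := my_cos_le x (le_trans h0 hax)
  have hd : (1 - a^2/2 + a^4/24) - (1 - x^2/2 + x^4/24)
      = (x^2-a^2)*(1/2 - (x^2+a^2)/24) := by ring
  have hx2 : x^2 ≤ 1 := by nlinarith
  have ha2 : a^2 ≤ 1 := by nlinarith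
  have hbr : 0 ≤ 1/2 - (x^2+a^2)/24 := by linarith
  have hsq : 0 ≤ x^2 - a^2 := by nlinarith
  nlinarith [mul_nonneg hsq hbr]

lemma sin_le_linear_mul (x a G : ℝ) (h0 : 0 ≤ a) (hax : a ≤ x) (hx1 : x ≤ 1)
    (hG : 1 - a^2/6 + a^4/120 ≤ G) : Real.sin x ≤ x * G := by
  have hx0 : 0 ≤ x := le_trans h0 hax
  have h := my_sin_le5 x hx0
  have hd : (1 - a^2/6 + a^4/120) - (1 - x^2/6 + x^4/120)
      = (x^2-a^2)*(1/6 - (x^2+a^2)/120) := by ring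
  have hx2 : x^2 ≤ 1 := by nlinarith
  have ha2 : a^2 ≤ 1 := by nlinarith
  have hbr : 0 ≤ 1/6 - (x^2+a^2)/120 := by linarith
  have hsq : 0 ≤ x^2 - a^2 := by nlinarith
  have h1 : 1 - x^2/6 + x^4/120 ≤ G := by nlinarith [mul_nonneg hsq hbr]
  have h2 : x - x^3/6 + x^5/120 = x*(1 - x^2/6 + x^4/120) := by ring
  calc Real.sin x ≤ x - x^3/6 + x^5/120 := h
    _ = x*(1 - x^2/6 + x^4/120) := h2
    _ ≤ x * G := by exact mul_le_mul_of_nonneg_left h1 hx0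
lemma reduce (n m : ℝ) (hn : 4 ≤ n) (hm : 4 ≤ m)
    (key : 0 < (π/n) * (4*(Real.cos (π/m))^2*(Real.cos (π/n)) - Real.sin (π/n)*Real.cos (π/n)
      - 2*(Real.sin (π/m))*(Real.cos (π/m))*(Real.sin (π/n))) - (π + π/n)*(Real.sin (π/n))^2) :
    2 * Real.cos (π / m) ^ 2 - 1 / 2 * Real.sin (π / n) -
        1 / 2 * Real.sin (2 * π / m) * Real.tan (π / n) >
      Real.sin (π / n) ^ 2 * (n + 1) / (2 * Real.cos (π / n)) := by
  have hpi := Real.pi_pos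
  have hn0 : 0 < n := by linarith
  have hx : 0 < π/n := by positivity
  have hxle : π/n ≤ π/4 := by
    rw [div_le_div_iff₀ hn0 (by norm_num)]
    nlinarith
  have hc : 0 < Real.cos (π/n) := by
    apply Real.cos_pos_of_mem_Ioo
    constructor
    · linarith
    · nlinarith
  have h2y : Real.sin (2*π/m) = 2 * Real.sin (π/m) * Real.cos (π/m) := by
    rw [show 2*π/m = 2*(π/m) by ring, Real.sin_two_mul]
  have hpx : π + π/n = (π/n) * (n+1) := by field_simp
  rw [hpx] at key
  have h4 : 0 < (π/n) * ((4*(Real.cos (π/m))^2*(Real.cos (π/n)) - Real.sin (π/n)*Real.cos (π/n)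
      - 2*(Real.sin (π/m))*(Real.cos (π/m))*(Real.sin (π/n))) - (Real.sin (π/n))^2*(n+1)) := by
    ring_nf at key ⊢
    linarith
  have h5 : 0 < (4*(Real.cos (π/m))^2*(Real.cos (π/n)) - Real.sin (π/n)*Real.cos (π/n)
      - 2*(Real.sin (π/m))*(Real.cos (π/m))*(Real.sin (π/n))) - (Real.sin (π/n))^2*(n+1) := by
    by_contra hB
    push_neg at hB
    nlinarith [mul_nonpos_of_nonneg_of_nonpos hx.le hB]
  rw [gt_iff_lt, div_lt_iff₀ (by positivity : (0:ℝ) < 2*Real.cos (π/n)), h2y,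
    Real.tan_eq_sin_div_cos]
  have hexp : (2 * Real.cos (π / m) ^ 2 - 1 / 2 * Real.sin (π / n) -
      1 / 2 * (2 * Real.sin (π/m) * Real.cos (π/m)) * (Real.sin (π/n) / Real.cos (π/n)))
      * (2 * Real.cos (π/n))
      = 4*(Real.cos (π/m))^2*(Real.cos (π/n)) - Real.sin (π/n)*Real.cos (π/n)
      - 2*(Real.sin (π/m))*(Real.cos (π/m))*(Real.sin (π/n)) := by
    field_simp
    ring
  rw [hexp]
  linarith
lemma poly_sin_upper158 (x b S : ℝ) (h0 : 0 ≤ x) (hxb : x ≤ b) (hb : b ≤ 1.571)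
    (hS : b - b^3/6 + b^5/120 ≤ S) : Real.sin x ≤ S := by
  have h := my_sin_le5 x h0
  have hb0 : 0 ≤ b := le_trans h0 hxb
  have hfac : 9*(b^4+b^3*x+b^2*x^2+b*x^3+x^4) - 5*(b^2+b*x+x^2)^2
      = (b-x)^2*(4*b^2+7*(b*x)+4*x^2) := by ring
  have hbx : 0 ≤ b*x := mul_nonneg hb0 h0
  have h9 : 5*(b^2+b*x+x^2)^2 ≤ 9*(b^4+b^3*x+b^2*x^2+b*x^3+x^4) := by
    nlinarith [mul_nonneg (sq_nonneg (b-x)) (by nlinarith [sq_nonneg b, sq_nonneg x] :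
      (0:ℝ) ≤ 4*b^2+7*(b*x)+4*x^2)]
  have hs0' : 0 ≤ b^2+b*x+x^2 := by nlinarith [sq_nonneg b, sq_nonneg x]
  have hs3 : b^2+b*x+x^2 ≤ 7.404123 := by nlinarith [mul_nonneg (by linarith : (0:ℝ) ≤ 1.571 - b) (by linarith : (0:ℝ) ≤ 1.571 + b), mul_nonneg (sub_nonneg.2 hxb) h0, sq_nonneg (b-x)]
  have hquad : 0 ≤ 216 - 36*(b^2+b*x+x^2) + (b^2+b*x+x^2)^2 := by
    nlinarith [mul_nonneg (by linarith : (0:ℝ) ≤ 7.6 - (b^2+b*x+x^2))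
      (by linarith : (0:ℝ) ≤ 28.4 - (b^2+b*x+x^2))]
  have hbr : 0 ≤ 1 - (b^2+b*x+x^2)/6 + (b^4+b^3*x+b^2*x^2+b*x^3+x^4)/120 := by
    nlinarith [h9, hquad]
  nlinarith [mul_nonneg (sub_nonneg.2 hxb) hbr]
lemma e1_help (V0 C0 v c : ℝ) (hV0p : 0 ≤ V0) (hC0p : 0 ≤ C0) (hv0 : V0 ≤ v)
    (hc0 : C0 ≤ c) : 4*V0^2*C0 ≤ 4*v^2*c := by
  have hv2 : V0^2 ≤ v^2 := by nlinarith
  nlinarith [mul_le_mul hv2 hc0 hC0p (sq_nonneg v)]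

lemma e3_help (u v s U S : ℝ) (hu0 : 0 ≤ u) (hs0 : 0 ≤ s) (hvp : 0 ≤ v) (hv1 : v ≤ 1)
    (hu1 : u ≤ U) (hs1 : s ≤ S) (hUp : 0 ≤ U) (hSp : 0 ≤ S) : 2*u*v*s ≤ 2*U*S := by
  nlinarith [mul_le_mul (mul_le_mul hu1 hv1 hvp hUp) hs1 hs0 (by linarith : (0:ℝ) ≤ U*1)]

lemma e4_help (p x s S G P X : ℝ) (hp0 : 0 ≤ p) (hx : 0 < x) (hs0 : 0 ≤ s) (hs1 : s ≤ S)
    (hsg : s ≤ x*G) (hpP : p ≤ P) (hxX : x ≤ X) (hSp : 0 ≤ S) (hGp : 0 ≤ G) :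
    (p+x)*s^2 ≤ ((P+X)*S*G)*x := by
  have h1 : s^2 ≤ S*(x*G) := by nlinarith
  have h2 : 0 ≤ S*(x*G) := by positivity
  have h3 : (p+x)*s^2 ≤ (P+X)*(S*(x*G)) :=
    mul_le_mul (by linarith) h1 (sq_nonneg s) (by linarith)
  nlinarith [h3]

lemma G_nonneg (a G : ℝ) (h0 : 0 ≤ a) (ha : a ≤ 1) (hG : 1 - a^2/6 + a^4/120 ≤ G) :
    0 ≤ G := by nlinarith

lemma slice_lemma (n m n0 n1 m0 X0 X1 S1 C0 C1 Y1 W1 V0 G1 : ℝ)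
    (hn0 : n0 ≤ n) (hn1 : n ≤ n1) (hm0 : m0 ≤ m)
    (hn0p : 4 ≤ n0) (hm0p : 4 ≤ m0)
    (hX0 : 0 < X0) (hX0v : X0 ≤ 3.141592/n1)
    (hX1v : 3.141593/n0 ≤ X1) (hX1b : X1 ≤ 1)
    (hS1 : X1 - X1^3/6 + X1^5/120 ≤ S1)
    (hC0 : C0 ≤ 1 - X1^2/2 + X1^4/24 - X1^6/720) (hC0p : 0 ≤ C0)
    (hC1 : 1 - X0^2/2 + X0^4/24 ≤ C1)
    (hY1v : 3.141593/m0 ≤ Y1) (hY1b : Y1 ≤ 0.7855)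
    (hW1 : 2*Y1 - (2*Y1)^3/6 + (2*Y1)^5/120 ≤ W1)
    (hV0 : V0 ≤ 1 - Y1^2/2 + Y1^4/24 - Y1^6/720) (hV0p : 0 ≤ V0)
    (hG1 : 1 - X0^2/6 + X0^4/120 ≤ G1)
    (hkey : 0 < 4*V0^2*C0 - S1*C1 - W1*S1 - (3.141593+X1)*S1*G1) :
    2 * Real.cos (π / m) ^ 2 - 1 / 2 * Real.sin (π / n) -
        1 / 2 * Real.sin (2 * π / m) * Real.tan (π / n) >
      Real.sin (π / n) ^ 2 * (n + 1) / (2 * Real.cos (π / n)) := by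
  have hpi := Real.pi_pos
  have hnp : (0:ℝ) < n := by linarith
  have hmp : (0:ℝ) < m := by linarith
  have hn1p : (0:ℝ) < n1 := by linarith
  have hm0pp : (0:ℝ) < m0 := by linarith
  apply reduce n m (by linarith) (by linarith)
  set x := π/n with hxdef
  set y := π/m with hydef
  have hxp : 0 < x := by positivity
  have hyp : 0 < y := by positivity
  -- x range
  have hxlo : X0 ≤ x := le_trans hX0v (div_le_div₀ Real.pi_pos.le Real.pi_gt_d6.le hnp hn1)
  have hxhi : x ≤ X1 := le_trans (div_le_div₀ (by norm_num) Real.pi_lt_d6.le (by linarith) hn0) hX1v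
  have hX1p : 0 < X1 := lt_of_lt_of_le hX0 (le_trans hxlo hxhi)
  have hx1 : x ≤ 1 := le_trans hxhi hX1b
  -- y range
  have hyhi : y ≤ Y1 := le_trans (div_le_div₀ (by norm_num) Real.pi_lt_d6.le (by linarith) hm0) hY1v
  have hy1 : y ≤ 1 := by linarith
  -- trig bounds
  have hs1 : Real.sin x ≤ S1 := poly_sin_upper x X1 S1 hxp.le hxhi hX1b hS1
  have hs0 : 0 ≤ Real.sin x := Real.sin_nonneg_of_nonneg_of_le_pi hxp.le (by linarith [Real.pi_gt_three])
  have hsg : Real.sin x ≤ x * G1 := sin_le_linear_mul x X0 G1 hX0.le hxlo hx1 hG1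
  have hc0 : C0 ≤ Real.cos x := poly_cos_lower x X1 C0 hxp.le hxhi hX1b hC0
  have hc1 : Real.cos x ≤ C1 := poly_cos_upper x X0 C1 hX0.le hxlo hx1 hC1
  have hu0 : 0 ≤ Real.sin y := Real.sin_nonneg_of_nonneg_of_le_pi hyp.le (by linarith [Real.pi_gt_three])
  have hv0 : V0 ≤ Real.cos y := poly_cos_lower y Y1 V0 hyp.le hyhi (by linarith) hV0
  have hv1 : Real.cos y ≤ 1 := Real.cos_le_one y
  have hcp : 0 ≤ Real.cos x := le_trans hC0p hc0
  have hvp : 0 ≤ Real.cos y := le_trans hV0p hv0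
  have hS1p : 0 ≤ S1 := le_trans hs0 hs1
  have hG1p : 0 ≤ G1 := G_nonneg X0 G1 hX0.le (le_trans hxlo hx1) hG1
  have hppi : π ≤ 3.141593 := Real.pi_lt_d6.le
  -- the four estimates
  have e1 : 4*V0^2*C0 ≤ 4*(Real.cos y)^2*(Real.cos x) := e1_help V0 C0 _ _ hV0p hC0p hv0 hc0
  have e2 : Real.sin x * Real.cos x ≤ S1*C1 :=
    mul_le_mul hs1 hc1 hcp hS1p
  have huv : 2*(Real.sin y)*(Real.cos y) ≤ W1 := by
    rw [show 2*Real.sin y*Real.cos y = Real.sin (2*y) from (Real.sin_two_mul y).symm]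
    exact poly_sin_upper158 (2*y) (2*Y1) W1 (by positivity) (by linarith) (by linarith) hW1
  have huvp : 0 ≤ 2*(Real.sin y)*(Real.cos y) := by positivity
  have hW1p : 0 ≤ W1 := le_trans huvp huv
  have e3 : 2*(Real.sin y)*(Real.cos y)*(Real.sin x) ≤ W1*S1 :=
    mul_le_mul huv hs1 hs0 hW1p
  have e4 : (π + x)*(Real.sin x)^2 ≤ ((3.141593+X1)*S1*G1)*x :=
    e4_help π x _ S1 G1 3.141593 X1 Real.pi_pos.le hxp hs0 hs1 hsg hppi hxhi hS1p hG1p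
  have e5 : x*(4*V0^2*C0 - S1*C1 - W1*S1) ≤
      x*(4*(Real.cos y)^2*(Real.cos x) - Real.sin x*Real.cos x
        - 2*(Real.sin y)*(Real.cos y)*(Real.sin x)) :=
    mul_le_mul_of_nonneg_left (by linarith) hxp.le
  have e6 : 0 < x*(4*V0^2*C0 - S1*C1 - W1*S1 - (3.141593+X1)*S1*G1) := mul_pos hxp hkey
  have h7 : x*(4*V0^2*C0 - S1*C1 - W1*S1) - ((3.141593+X1)*S1*G1)*x
      = x*(4*V0^2*C0 - S1*C1 - W1*S1 - (3.141593+X1)*S1*G1) := by ring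
  linarith [e4, e5, e6, h7]

lemma two_sin_cos_le_one (t : ℝ) : 2*Real.sin t*Real.cos t ≤ 1 := by
  nlinarith [Real.sin_sq_add_cos_sq t, sq_nonneg (Real.sin t - Real.cos t)]

lemma tail_lemma (n m : ℝ) (hn : 9 ≤ n) (hm : 4 ≤ m) :
    2 * Real.cos (π / m) ^ 2 - 1 / 2 * Real.sin (π / n) -
        1 / 2 * Real.sin (2 * π / m) * Real.tan (π / n) >
      Real.sin (π / n) ^ 2 * (n + 1) / (2 * Real.cos (π / n)) := by
  have hpi := Real.pi_pos
  have hnp : (0:ℝ) < n := by linarith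
  have hmp : (0:ℝ) < m := by linarith
  apply reduce n m (by linarith) (by linarith)
  set x := π/n with hxdef
  set y := π/m with hydef
  have hxp : 0 < x := by positivity
  have hyp : 0 < y := by positivity
  have hxhi : x ≤ 0.3490659 :=
    le_trans (div_le_div₀ (by norm_num) Real.pi_lt_d6.le (by norm_num) hn) (by norm_num)
  have hyhi : y ≤ 0.7853983 :=
    le_trans (div_le_div₀ (by norm_num) Real.pi_lt_d6.le (by norm_num) hm) (by norm_num)
  have hs1 : Real.sin x ≤ 0.3420242 :=
    poly_sin_upper x 0.3490659 _ hxp.le hxhi (by norm_num) (by norm_num)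
  have hsx : Real.sin x ≤ x := my_sin_le x hxp.le
  have hs0 : 0 ≤ Real.sin x := Real.sin_nonneg_of_nonneg_of_le_pi hxp.le (by linarith [Real.pi_gt_three])
  have hc0 : (0.9396921:ℝ) ≤ Real.cos x :=
    poly_cos_lower x 0.3490659 _ hxp.le hxhi (by norm_num) (by norm_num)
  have hc1 : Real.cos x ≤ 1 := Real.cos_le_one x
  have hv0 : (0.7071031:ℝ) ≤ Real.cos y :=
    poly_cos_lower y 0.7853983 _ hyp.le hyhi (by norm_num) (by norm_num)
  have hu0 : 0 ≤ Real.sin y := Real.sin_nonneg_of_nonneg_of_le_pi hyp.le (by linarith [Real.pi_gt_three])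
  have huv : 2*(Real.sin y)*(Real.cos y) ≤ 1 := two_sin_cos_le_one y
  have hcp : (0:ℝ) ≤ Real.cos x := by linarith
  have hvp : (0:ℝ) ≤ Real.cos y := by linarith
  have hppi : π ≤ 3.141593 := Real.pi_lt_d6.le
  have e1 : 4*(0.7071031:ℝ)^2*0.9396921 ≤ 4*(Real.cos y)^2*(Real.cos x) :=
    e1_help _ _ _ _ (by norm_num) (by norm_num) hv0 hc0
  have e2 : Real.sin x * Real.cos x ≤ 0.3420242 := by nlinarith [mul_le_mul hs1 hc1 hcp (by norm_num : (0:ℝ) ≤ 0.3420242)]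
  have e3 : 2*(Real.sin y)*(Real.cos y)*(Real.sin x) ≤ 0.3420242 := by
    nlinarith [mul_le_mul huv hs1 hs0 (by norm_num : (0:ℝ) ≤ 1), mul_nonneg (mul_nonneg hu0 hvp) hs0]
  have e4 : (π + x)*(Real.sin x)^2 ≤ ((3.141593+0.3490659)*0.3420242)*x := by
    have hs2 : (Real.sin x)^2 ≤ 0.3420242*x := by nlinarith [mul_le_mul hs1 hsx hs0 (by norm_num : (0:ℝ) ≤ 0.3420242)]
    have hpx1 : π + x ≤ 3.141593 + 0.3490659 := by linarith
    have h3 : (π+x)*(Real.sin x)^2 ≤ (3.141593+0.3490659)*(0.3420242*x) :=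
      mul_le_mul hpx1 hs2 (sq_nonneg _) (by norm_num)
    nlinarith [h3]
  have e5 : x*(4*(0.7071031:ℝ)^2*0.9396921 - 0.3420242 - 0.3420242) ≤
      x*(4*(Real.cos y)^2*(Real.cos x) - Real.sin x*Real.cos x
        - 2*(Real.sin y)*(Real.cos y)*(Real.sin x)) :=
    mul_le_mul_of_nonneg_left (by linarith) hxp.le
  have e6 : 0 < x*(4*(0.7071031:ℝ)^2*0.9396921 - 0.3420242 - 0.3420242
      - (3.141593+0.3490659)*0.3420242) := by
    apply mul_pos hxp
    norm_num
  have h7 : x*(4*(0.7071031:ℝ)^2*0.9396921 - 0.3420242 - 0.3420242) - ((3.141593+0.3490659)*0.3420242)*x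
      = x*(4*(0.7071031:ℝ)^2*0.9396921 - 0.3420242 - 0.3420242
      - (3.141593+0.3490659)*0.3420242) := by ring
  linarith [e4, e5, e6, h7]
lemma cover_A (n m : ℝ) (h0 : 5 ≤ n) (h1 : n ≤ 7) (hm : 10 ≤ m) :
    2 * Real.cos (π / m) ^ 2 - 1 / 2 * Real.sin (π / n) -
        1 / 2 * Real.sin (2 * π / m) * Real.tan (π / n) >
      Real.sin (π / n) ^ 2 * (n + 1) / (2 * Real.cos (π / n)) := by
  rcases le_total n 5.2500000 with h|h
  · exact slice_lemma n m 5 5.2500000 10 0.5983984 0.6283186 0.5877930 0.8090163 0.8263023 0.3141593 0.5877930 0.9510565 0.9413885 (by linarith) (by linarith) (by linarith)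
      (by norm_num) (by norm_num) (by norm_num) (by norm_num) (by norm_num) (by norm_num)
      (by norm_num) (by norm_num) (by norm_num) (by norm_num) (by norm_num) (by norm_num)
      (by norm_num) (by norm_num) (by norm_num) (by norm_num) (by norm_num)
  rcases le_total n 5.5000000 with h|h
  · exact slice_lemma n m 5.2500000 5.5000000 10 0.5711985 0.5983987 0.5633256 0.8262383 0.8413016 0.3141593 0.5877930 0.9510565 0.9465092 (by linarith) (by linarith) (by linarith)
      (by norm_num) (by norm_num) (by norm_num) (by norm_num) (by norm_num) (by norm_num)
      (by norm_num) (by norm_num) (by norm_num) (by norm_num) (by norm_num) (by norm_num)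
      (by norm_num) (by norm_num) (by norm_num) (by norm_num) (by norm_num)
  rcases le_total n 6 with h|h
  · exact slice_lemma n m 5.5000000 6 10 0.5235986 0.5711988 0.5406449 0.8412531 0.8660540 0.3141593 0.5877930 0.9510565 0.9549338 (by linarith) (by linarith) (by linarith)
      (by norm_num) (by norm_num) (by norm_num) (by norm_num) (by norm_num) (by norm_num)
      (by norm_num) (by norm_num) (by norm_num) (by norm_num) (by norm_num) (by norm_num)
      (by norm_num) (by norm_num) (by norm_num) (by norm_num) (by norm_num)
  · exact slice_lemma n m 6 7 10 0.4487988 0.5235989 0.5000023 0.8660252 0.9009803 0.3141593 0.5877930 0.9510565 0.9667681 (by linarith) (by linarith) (by linarith)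
      (by norm_num) (by norm_num) (by norm_num) (by norm_num) (by norm_num) (by norm_num)
      (by norm_num) (by norm_num) (by norm_num) (by norm_num) (by norm_num) (by norm_num)
      (by norm_num) (by norm_num) (by norm_num) (by norm_num) (by norm_num)

lemma cover_B (n m : ℝ) (h0 : 7 ≤ n) (h1 : n ≤ 9) (hm : 5 ≤ m) :
    2 * Real.cos (π / m) ^ 2 - 1 / 2 * Real.sin (π / n) -
        1 / 2 * Real.sin (2 * π / m) * Real.tan (π / n) >
      Real.sin (π / n) ^ 2 * (n + 1) / (2 * Real.cos (π / n)) := by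
    exact slice_lemma n m 7 9 5 0.3490657 0.4487990 0.4338846 0.9009688 0.9396952 0.6283186 0.9520172 0.8090163 0.9798160 (by linarith) (by linarith) (by linarith)
      (by norm_num) (by norm_num) (by norm_num) (by norm_num) (by norm_num) (by norm_num)
      (by norm_num) (by norm_num) (by norm_num) (by norm_num) (by norm_num) (by norm_num)
      (by norm_num) (by norm_num) (by norm_num) (by norm_num) (by norm_num)

/-- For real `n, m` in the stated ranges, `g_L(n, m) > g_R(n)`. -/
theorem stmt_13 (n m : ℝ)
    (h : (5 ≤ n ∧ 10 ≤ m) ∨ (7 ≤ n ∧ 5 ≤ m) ∨ (9 ≤ n ∧ 4 ≤ m)) :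
    2 * Real.cos (π / m) ^ 2 - 1 / 2 * Real.sin (π / n) -
        1 / 2 * Real.sin (2 * π / m) * Real.tan (π / n) >
      Real.sin (π / n) ^ 2 * (n + 1) / (2 * Real.cos (π / n)) := by
  rcases h with ⟨h1,h2⟩ | ⟨h1,h2⟩ | ⟨h1,h2⟩
  · rcases le_total n 7 with hn|hn
    · exact cover_A n m h1 hn (by linarith)
    · rcases le_total n 9 with hn'|hn'
      · exact cover_B n m hn hn' (by linarith)
      · exact tail_lemma n m hn' (by linarith)
  · rcases le_total n 9 with hn|hn
    · exact cover_B n m h1 hn h2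
    · exact tail_lemma n m hn (by linarith)
  · exact tail_lemma n m h1 h2
end
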